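/- arXiv:1407.1650 — 2 statements merged into one kernel-verified Lean document; each statement's English description precedes it below -/
import Mathlib

section
/- Lower semicontinuity of the measure-LP value: define p*(t₀,x₀) as the infimum of ∫ l dμ + ∫ l_T dμ_T over pairs (μ, μ_T) of nonnegative Borel measures on [0,T]×X×U and {T}×X_T satisfying the weak Liouville equation with right-hand side δ_{t₀}⊗δ_{x₀}. Then the function (t₀,x₀) ↦ p*(t₀,x₀) is lower semicontinuous on [0,T] × X (with value +∞ where the LP is infeasible). -/
open MeasureTheory Set

open Filter Topology


lemma ultralim {ι : Type*} (U : Ultrafilter ι) {h : ι → ℝ} {lo hi : ℝ}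
    (hb : ∀ i, h i ∈ Icc lo hi) : ∃ L, L ∈ Icc lo hi ∧ Tendsto h ↑U (𝓝 L) := by
  have hle : ↑(U.map h) ≤ 𝓟 (Icc lo hi) := by
    rw [Filter.le_principal_iff]
    exact Filter.mem_map.mpr (Filter.univ_mem' hb)
  obtain ⟨L, hL, hle2⟩ := isCompact_Icc.ultrafilter_le_nhds (U.map h) hle
  exact ⟨L, hL, hle2⟩

lemma integrable_of_support {Ω : Type*} [TopologicalSpace Ω] [MeasurableSpace Ω]
    [OpensMeasurableSpace Ω] {K : Set Ω} (hK : IsCompact K) {ν : Measure Ω}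
    [IsFiniteMeasure ν] (hν : ν Kᶜ = 0) {g : Ω → ℝ} (hg : Continuous g) :
    Integrable g ν := by
  obtain ⟨C, hC⟩ := hK.exists_bound_of_continuousOn hg.continuousOn
  have hae : ∀ᵐ x ∂ν, x ∈ K := by
    rw [ae_iff]
    exact hν
  exact (integrable_const C).mono' hg.aestronglyMeasurable (hae.mono fun x hx => hC x hx)

lemma tile_union (c : ℝ) (q : ℕ → ℝ) (hq : ∀ b, 0 ≤ q b) (N : ℕ) :
    (⋃ b ∈ Finset.range N, Ico (c + ∑ k ∈ Finset.range b, q k)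
      (c + ∑ k ∈ Finset.range b, q k + q b)) = Ico c (c + ∑ k ∈ Finset.range N, q k) := by
  induction N with
  | zero => simp
  | succ N ih =>
    have hs : ∀ b, 0 ≤ ∑ k ∈ Finset.range b, q k := fun b => Finset.sum_nonneg fun k _ => hq k
    rw [Finset.sum_range_succ, ← add_assoc, Finset.range_add_one, Finset.set_biUnion_insert, ih,
      union_comm, Ico_union_Ico_eq_Ico (by linarith [hs N]) (by linarith [hq N])]

lemma tile_disj (c : ℝ) (q : ℕ → ℝ) (hq : ∀ b, 0 ≤ q b) {b b' : ℕ} (hbb : b < b') :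
    Disjoint (Ico (c + ∑ k ∈ Finset.range b, q k) (c + ∑ k ∈ Finset.range b, q k + q b))
      (Ico (c + ∑ k ∈ Finset.range b', q k) (c + ∑ k ∈ Finset.range b', q k + q b')) := by
  have h1 : (∑ k ∈ Finset.range b, q k) + q b ≤ ∑ k ∈ Finset.range b', q k := by
    rw [← Finset.sum_range_succ]
    exact Finset.sum_le_sum_of_subset_of_nonneg
      (Finset.range_subset_range.mpr hbb) (fun k _ _ => hq k)
  rw [Set.disjoint_left]
  rintro x ⟨hx1, hx2⟩ ⟨hx3, hx4⟩
  linarith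

lemma exists_partition {Ω : Type*} [MetricSpace Ω] [MeasurableSpace Ω] [BorelSpace Ω]
    {K : Set Ω} (hK : IsCompact K) {δ : ℝ} (hδ : 0 < δ) :
    ∃ (N : ℕ) (cell : ℕ → Set Ω),
      (∀ b, MeasurableSet (cell b)) ∧ (∀ b, cell b ⊆ K) ∧
      (∀ b b', b ≠ b' → Disjoint (cell b) (cell b')) ∧
      (⋃ b ∈ Finset.range N, cell b) = K ∧
      (∀ b, ∀ x ∈ cell b, ∀ y ∈ cell b, dist x y ≤ 2 * δ) := by
  rcases K.eq_empty_or_nonempty with hKe | ⟨x₀, hx₀⟩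
  · exact ⟨0, fun _ => ∅, by simp, by simp, by simp, by simp [hKe], by simp⟩
  obtain ⟨t, htK, htfin, htcov⟩ := hK.finite_cover_balls (e := δ) hδ
  set L := htfin.toFinset.toList with hL
  set N := L.length with hN
  set pt : ℕ → Ω := fun b => L.getD b x₀ with hpt
  have hKmeas : MeasurableSet K := hK.isClosed.measurableSet
  set cell : ℕ → Set Ω := fun b =>
    if b < N then (K ∩ Metric.ball (pt b) δ) \ ⋃ (b' : ℕ) (_ : b' < b), Metric.ball (pt b') δ
    else ∅ with hcell
  have hcelleq : ∀ b, b < N → cell b =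
      (K ∩ Metric.ball (pt b) δ) \ ⋃ (b' : ℕ) (_ : b' < b), Metric.ball (pt b') δ :=
    fun b hb => by simp only [hcell, if_pos hb]
  have hsub : ∀ b, cell b ⊆ K := by
    intro b
    simp only [hcell]
    split
    · exact fun x hx => hx.1.1
    · exact empty_subset _
  have hball : ∀ b, cell b ⊆ Metric.ball (pt b) δ := by
    intro b
    simp only [hcell]; split
    · exact fun x hx => hx.1.2
    · exact empty_subset _
  refine ⟨N, cell, ?_, hsub, ?_, ?_, ?_⟩
  · intro b
    simp only [hcell]
    split
    · exact ((hKmeas.inter measurableSet_ball).diff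
        (MeasurableSet.biUnion (to_countable _) fun _ _ => measurableSet_ball))
    · exact MeasurableSet.empty
  · have key : ∀ b b', b < b' → Disjoint (cell b) (cell b') := by
      intro b b' hbb
      rw [Set.disjoint_left]
      intro x hxb hxb'
      have h1 : x ∈ Metric.ball (pt b) δ := hball b hxb
      simp only [hcell] at hxb'
      by_cases hb' : b' < N
      · simp only [if_pos hb'] at hxb'
        exact hxb'.2 (mem_biUnion hbb h1)
      · simp only [if_neg hb'] at hxb'
        exact hxb'
    intro b b' hne
    rcases lt_or_gt_of_ne hne with h | h
    · exact key b b' h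
    · exact (key b' b h).symm
  · apply Subset.antisymm
    · exact iUnion₂_subset fun b _ => hsub b
    · intro x hx
      have hx2 := htcov hx
      rw [mem_iUnion₂] at hx2
      obtain ⟨y, hyt, hxy⟩ := hx2
      have hyL : y ∈ L := by
        rw [hL]
        simp [Set.Finite.mem_toFinset, hyt]
      obtain ⟨b, hb, hby⟩ := List.mem_iff_getElem.mp hyL
      have hPex : ∃ b, b < N ∧ x ∈ Metric.ball (pt b) δ := by
        refine ⟨b, hb, ?_⟩
        rw [hpt]
        simp only [List.getD_eq_getElem?_getD]
        rw [List.getElem?_eq_getElem hb]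
        simpa [hby] using hxy
      classical
      set b₀ := Nat.find hPex with hb₀
      obtain ⟨hb₀N, hb₀ball⟩ := Nat.find_spec hPex
      rw [mem_iUnion₂]
      refine ⟨b₀, Finset.mem_range.mpr hb₀N, ?_⟩
      rw [hcelleq b₀ hb₀N]
      refine ⟨⟨hx, hb₀ball⟩, ?_⟩
      intro hmem
      rw [mem_iUnion₂] at hmem
      obtain ⟨b', hb'lt, hb'ball⟩ := hmem
      exact Nat.find_min hPex hb'lt ⟨hb'lt.trans hb₀N, hb'ball⟩
  · intro b x hxb y hyb
    have h1 := hball b hxb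
    have h2 := hball b hyb
    rw [Metric.mem_ball] at h1 h2
    have := dist_triangle x (pt b) y
    rw [dist_comm (pt b) y] at this
    linarith

theorem exists_weak_limit {Ω : Type*} [MetricSpace Ω] [CompleteSpace Ω] [MeasurableSpace Ω]
    [BorelSpace Ω] {ι : Type*} (Uf : Ultrafilter ι) (μ : ι → Measure Ω) {K : Set Ω}
    (hK : IsCompact K) (hfin : ∀ i, IsFiniteMeasure (μ i)) (hsupp : ∀ i, μ i Kᶜ = 0)
    {M : ℝ} (hM : ∀ i, (μ i Set.univ).toReal ≤ M) :
    ∃ ν : Measure Ω, IsFiniteMeasure ν ∧ ν Kᶜ = 0 ∧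
      ∀ g : Ω → ℝ, Continuous g →
        Tendsto (fun i => ∫ x, g x ∂(μ i)) ↑Uf (𝓝 (∫ x, g x ∂ν)) := by
  classical
  have hμK : ∀ i, μ i Set.univ = μ i K := by
    intro i
    refine le_antisymm ?_ (measure_mono (subset_univ K))
    rw [← Set.union_compl_self K]
    exact (measure_union_le _ _).trans (by rw [hsupp i, add_zero])
  rcases K.eq_empty_or_nonempty with hKe | ⟨xs, hxs⟩
  · refine ⟨0, inferInstance, by simp, ?_⟩
    intro g hg
    have hz : ∀ i, μ i = 0 := by
      intro i
      apply Measure.measure_univ_eq_zero.mp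
      rw [hμK i, hKe, measure_empty]
    simp only [hz, integral_zero_measure]
    exact tendsto_const_nhds
  -- bound on K
  obtain ⟨D, hD⟩ := Metric.isBounded_iff.mp hK.isBounded
  have hD0 : 0 ≤ D := le_trans (by simp) (hD hxs hxs)
  -- diameters
  set dd : ℕ → ℝ := fun j => if j = 0 then D else 2 * (1 / j) with hdd
  have hdd0 : ∀ j, 0 ≤ dd j := by
    intro j; rw [hdd]; dsimp only; split
    · exact hD0
    · positivity
  have hddto : Tendsto dd atTop (𝓝 0) := by
    have h1 : Tendsto (fun j : ℕ => 2 * (1 / (j:ℝ))) atTop (𝓝 0) := by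
      have := tendsto_one_div_atTop_nhds_zero_nat (𝕜 := ℝ)
      simpa using this.const_mul 2
    apply h1.congr'
    filter_upwards [eventually_ge_atTop 1] with j hj
    rw [hdd]; dsimp only; rw [if_neg (by omega)]
  -- partitions
  have hpart : ∀ j : ℕ, ∃ (Nj : ℕ) (rcj : ℕ → Set Ω),
      (∀ b, MeasurableSet (rcj b)) ∧ (∀ b, rcj b ⊆ K) ∧
      (∀ b b', b ≠ b' → Disjoint (rcj b) (rcj b')) ∧
      (⋃ b ∈ Finset.range Nj, rcj b) = K ∧
      (∀ b, ∀ x ∈ rcj b, ∀ y ∈ rcj b, dist x y ≤ dd j) := by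
    intro j
    cases j with
    | zero =>
      refine ⟨1, fun b => if b = 0 then K else ∅, ?_, ?_, ?_, ?_, ?_⟩
      · intro b; dsimp only; split
        · exact hK.isClosed.measurableSet
        · exact MeasurableSet.empty
      · intro b; dsimp only; split
        · exact Subset.rfl
        · exact empty_subset _
      · intro b b' hne
        rcases Nat.eq_zero_or_pos b with hb | hb
        · have : b' ≠ 0 := by omega
          simp only [if_neg this, hb, if_pos rfl]
          exact disjoint_empty _
        · simp only [if_neg (by omega : b ≠ 0)]
          exact empty_disjoint _
      · simp
      · intro b x hx y hy
        by_cases hb : b = 0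
        · simp only [if_pos hb] at hx hy
          simpa [hdd] using hD hx hy
        · simp [if_neg hb] at hx
    | succ j' =>
      have hδ : (0:ℝ) < 1 / (j' + 1) := by positivity
      obtain ⟨Nj, cells, h1, h2, h3, h4, h5⟩ := exists_partition hK hδ
      refine ⟨Nj, cells, h1, h2, h3, h4, ?_⟩
      intro b x hx y hy
      have := h5 b x hx y hy
      have heq : dd (j' + 1) = 2 * (1 / ((j':ℝ) + 1)) := by
        rw [hdd]; dsimp only; rw [if_neg (by omega)]
        push_cast; ring_nf
      rw [heq]; linarith
  choose Nc rc hrcmeas hrcsub hrcdisj hrccover hrcdiam using hpart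
  -- cells
  set cell : ℕ → (ℕ → ℕ) → Set Ω := fun j a => ⋂ k ∈ Finset.range (j + 1), rc k (a k)
    with hcelldef
  have hcellmeas : ∀ j a, MeasurableSet (cell j a) :=
    fun j a => MeasurableSet.biInter (to_countable _) fun k _ => hrcmeas k (a k)
  have hcellsub : ∀ j a k, k ≤ j → cell j a ⊆ rc k (a k) := by
    intro j a k hk
    exact biInter_subset_of_mem (Finset.mem_range.mpr (by omega))
  have hcellK : ∀ j a, cell j a ⊆ K := fun j a =>
    (hcellsub j a 0 (Nat.zero_le j)).trans (hrcsub 0 _)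
  have hcellcongr : ∀ j a a', (∀ k, k ≤ j → a k = a' k) → cell j a = cell j a' := by
    intro j a a' h
    apply Set.iInter₂_congr
    intro k hk
    rw [h k (by simpa using Nat.lt_succ_iff.mp (Finset.mem_range.mp hk))]
  have hcellsucc : ∀ j a, cell (j + 1) a = cell j a ∩ rc (j + 1) (a (j + 1)) := by
    intro j a
    rw [hcelldef]
    dsimp only
    rw [Finset.range_add_one, Finset.set_biInter_insert, inter_comm]
  -- codes
  set W : ℕ → Finset (ℕ → ℕ) := fun j =>
    (Fintype.piFinset (fun k : Fin (j + 1) => Finset.range (Nc k))).image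
      (fun g k => if h : k ≤ j then g ⟨k, Nat.lt_succ_of_le h⟩ else 0) with hWdef
  have hWmem : ∀ j a, a ∈ W j ↔ ((∀ k, k ≤ j → a k < Nc k) ∧ ∀ k, j < k → a k = 0) := by
    intro j a
    rw [hWdef]
    dsimp only
    rw [Finset.mem_image]
    constructor
    · rintro ⟨g, hg, rfl⟩
      constructor
      · intro k hk
        dsimp only
        rw [dif_pos hk]
        have := Fintype.mem_piFinset.mp hg ⟨k, Nat.lt_succ_of_le hk⟩
        simpa using this
      · intro k hk
        dsimp only
        rw [dif_neg (by omega : ¬ k ≤ j)]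
    · rintro ⟨h1, h2⟩
      refine ⟨fun k => a k, ?_, ?_⟩
      · rw [Fintype.mem_piFinset]
        intro k
        exact Finset.mem_range.mpr (h1 k (Nat.lt_succ_iff.mp k.isLt))
      · funext k
        by_cases hk : k ≤ j
        · rw [dif_pos hk]
        · rw [dif_neg hk, h2 k (by omega)]
  -- limits of cell measures
  have hqmem : ∀ j (a : ℕ → ℕ) i, (μ i (cell j a)).toReal ∈ Icc (0:ℝ) M := by
    intro j a i
    refine ⟨ENNReal.toReal_nonneg, le_trans ?_ (hM i)⟩
    exact ENNReal.toReal_mono (measure_ne_top _ _) (measure_mono (subset_univ _))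
  have hplim : ∀ j (a : ℕ → ℕ), ∃ L, L ∈ Icc (0:ℝ) M ∧
      Tendsto (fun i => (μ i (cell j a)).toReal) ↑Uf (𝓝 L) :=
    fun j a => ultralim Uf (hqmem j a)
  choose p hpmem hptend using hplim
  have hp0 : ∀ j a, 0 ≤ p j a := fun j a => (hpmem j a).1
  have hpcongr : ∀ j a a', cell j a = cell j a' → p j a = p j a' := by
    intro j a a' h
    refine tendsto_nhds_unique (hptend j a) ?_
    have : (fun i => (μ i (cell j a)).toReal) = (fun i => (μ i (cell j a')).toReal) := by
      rw [h]
    rw [this]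
    exact hptend j a'
  have hpempty : ∀ j a, cell j a = ∅ → p j a = 0 := by
    intro j a h
    refine tendsto_nhds_unique (hptend j a) ?_
    have : (fun i => (μ i (cell j a)).toReal) = (fun _ => (0:ℝ)) := by
      funext i; rw [h]; simp
    rw [this]
    exact tendsto_const_nhds
  obtain ⟨M₀, hM₀mem, hM₀tend⟩ : ∃ L, L ∈ Icc (0:ℝ) M ∧
      Tendsto (fun i => (μ i K).toReal) ↑Uf (𝓝 L) := by
    refine ultralim Uf (fun i => ⟨ENNReal.toReal_nonneg, le_trans ?_ (hM i)⟩)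
    exact ENNReal.toReal_mono (measure_ne_top _ _) (measure_mono (subset_univ _))
  have hM₀0 : 0 ≤ M₀ := hM₀mem.1
  -- cells partition K at each level
  have hWdisj : ∀ j a a', a ∈ W j → a' ∈ W j → a ≠ a' → Disjoint (cell j a) (cell j a') := by
    intro j a a' ha ha' hne
    have h1 := (hWmem j a).mp ha
    have h2 := (hWmem j a').mp ha'
    have hex : ∃ k, k ≤ j ∧ a k ≠ a' k := by
      by_contra hcon
      push_neg at hcon
      apply hne
      funext k
      by_cases hk : k ≤ j
      · exact hcon k hk
      · rw [h1.2 k (by omega), h2.2 k (by omega)]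
    obtain ⟨k, hk, hkne⟩ := hex
    exact Set.disjoint_of_subset (hcellsub j a k hk) (hcellsub j a' k hk) (hrcdisj k _ _ hkne)
  have hcell0 : ∀ a : ℕ → ℕ, cell 0 a = rc 0 (a 0) := by
    intro a
    rw [hcelldef]
    dsimp only
    rw [Finset.range_one, Finset.set_biInter_singleton]
  have hWcover : ∀ j, (⋃ a ∈ W j, cell j a) = K := by
    intro j
    induction j with
    | zero =>
      apply Subset.antisymm (iUnion₂_subset fun a _ => hcellK 0 a)
      intro x hx
      have hx2 := (hrccover 0).symm.subset hx
      rw [mem_iUnion₂] at hx2 ⊢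
      obtain ⟨b, hb, hxb⟩ := hx2
      refine ⟨(fun k => if k = 0 then b else 0), ?_, ?_⟩
      · rw [hWmem]
        constructor
        · intro k hk
          have : k = 0 := by omega
          subst this
          simpa using Finset.mem_range.mp hb
        · intro k hk
          rw [if_neg (by omega : ¬ k = 0)]
      · rw [hcell0]
        simpa using hxb
    | succ j ih =>
      apply Subset.antisymm (iUnion₂_subset fun a _ => hcellK _ a)
      intro x hx
      have hx1 := ih.symm.subset hx
      rw [mem_iUnion₂] at hx1
      obtain ⟨a, ha, hxa⟩ := hx1
      have hx2 := (hrccover (j+1)).symm.subset hx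
      rw [mem_iUnion₂] at hx2
      obtain ⟨b, hb, hxb⟩ := hx2
      rw [mem_iUnion₂]
      have h1 := (hWmem j a).mp ha
      refine ⟨Function.update a (j+1) b, ?_, ?_⟩
      · rw [hWmem]
        constructor
        · intro k hk
          by_cases hkj : k = j + 1
          · subst hkj
            rw [Function.update_self]
            exact Finset.mem_range.mp hb
          · rw [Function.update_of_ne hkj]
            exact h1.1 k (by omega)
        · intro k hk
          rw [Function.update_of_ne (by omega)]
          exact h1.2 k (by omega)
      · rw [hcellsucc]
        constructor
        · rw [hcellcongr j (Function.update a (j+1) b) a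
            (fun k hk => Function.update_of_ne (by omega) _ _)]
          exact hxa
        · rw [Function.update_self]
          exact hxb
  have hqsumK : ∀ j i, ∑ a ∈ W j, (μ i (cell j a)).toReal = (μ i K).toReal := by
    intro j i
    have hmeas := measure_biUnion_finset (μ := μ i) (s := W j) (f := cell j)
      (fun a ha a' ha' hne => hWdisj j a a' ha ha' hne) (fun a _ => hcellmeas j a)
    rw [hWcover j] at hmeas
    rw [hmeas, ENNReal.toReal_sum (fun a _ => measure_ne_top _ _)]
  have hpsum : ∀ j, ∑ a ∈ W j, p j a = M₀ := by
    intro j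
    refine tendsto_nhds_unique (tendsto_finset_sum _ fun a _ => hptend j a) ?_
    exact hM₀tend.congr (fun i => (hqsumK j i).symm)
  have hchild : ∀ j a, p j a = ∑ b ∈ Finset.range (Nc (j+1)), p (j+1) (Function.update a (j+1) b) := by
    intro j a
    have h1 : ∀ b, cell (j+1) (Function.update a (j+1) b) = cell j a ∩ rc (j+1) b := by
      intro b
      rw [hcellsucc, hcellcongr j (Function.update a (j+1) b) a
        (fun k hk => Function.update_of_ne (by omega) _ _), Function.update_self]
    have hdec : cell j a = ⋃ b ∈ Finset.range (Nc (j+1)), cell (j+1) (Function.update a (j+1) b) := by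
      calc cell j a = cell j a ∩ K := (Set.inter_eq_self_of_subset_left (hcellK j a)).symm
        _ = cell j a ∩ ⋃ b ∈ Finset.range (Nc (j+1)), rc (j+1) b := by rw [hrccover]
        _ = ⋃ b ∈ Finset.range (Nc (j+1)), cell j a ∩ rc (j+1) b := by
            rw [Set.inter_iUnion₂]
        _ = ⋃ b ∈ Finset.range (Nc (j+1)), cell (j+1) (Function.update a (j+1) b) := by
            exact Set.iUnion₂_congr (fun b _ => (h1 b).symm)
    have hmeq : ∀ i, (μ i (cell j a)).toReal
        = ∑ b ∈ Finset.range (Nc (j+1)), (μ i (cell (j+1) (Function.update a (j+1) b))).toReal := by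
      intro i
      have hmeas := measure_biUnion_finset (μ := μ i) (s := Finset.range (Nc (j+1)))
        (f := fun b => cell (j+1) (Function.update a (j+1) b))
        (fun b _ b' _ hne => by
          show Disjoint (cell (j+1) (Function.update a (j+1) b))
            (cell (j+1) (Function.update a (j+1) b'))
          rw [h1 b, h1 b']
          exact Set.disjoint_of_subset inter_subset_right inter_subset_right
            (hrcdisj (j+1) b b' hne))
        (fun b _ => hcellmeas _ _)
      rw [← hdec] at hmeas
      rw [hmeas, ENNReal.toReal_sum (fun b _ => measure_ne_top _ _)]
    refine tendsto_nhds_unique ((hptend j a).congr hmeq) ?_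
    exact tendsto_finset_sum _ fun b _ => hptend (j+1) (Function.update a (j+1) b)
  -- interval endpoints
  set lep : ℕ → (ℕ → ℕ) → ℝ := fun j a =>
    ∑ k ∈ Finset.range (j+1), ∑ b ∈ Finset.range (a k), p k (Function.update a k b) with hlepdef
  have hlepsucc : ∀ j a, lep (j+1) a
      = lep j a + ∑ b ∈ Finset.range (a (j+1)), p (j+1) (Function.update a (j+1) b) := by
    intro j a
    rw [hlepdef]
    dsimp only
    rw [Finset.sum_range_succ]
  have hupdcongr : ∀ (k : ℕ) (a a' : ℕ → ℕ) (b : ℕ), (∀ l, l ≤ k → l ≠ k → a l = a' l) →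
      p k (Function.update a k b) = p k (Function.update a' k b) := by
    intro k a a' b h
    apply hpcongr
    apply hcellcongr
    intro l hl
    by_cases hlk : l = k
    · subst hlk; rw [Function.update_self, Function.update_self]
    · rw [Function.update_of_ne hlk, Function.update_of_ne hlk, h l hl hlk]
  have hlepcongr : ∀ j a a', (∀ k, k ≤ j → a k = a' k) → lep j a = lep j a' := by
    intro j a a' h
    rw [hlepdef]
    dsimp only
    refine Finset.sum_congr rfl (fun k hk => ?_)
    have hkj : k ≤ j := Nat.lt_succ_iff.mp (Finset.mem_range.mp hk)
    rw [h k hkj]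
    refine Finset.sum_congr rfl (fun b _ => ?_)
    exact hupdcongr k a a' b (fun l hl _ => h l (le_trans hl hkj))
  set Iv : ℕ → (ℕ → ℕ) → Set ℝ := fun j a => Ico (lep j a) (lep j a + p j a) with hIvdef
  -- children intervals tile the parent interval
  have hlepchild : ∀ j a b, lep (j+1) (Function.update a (j+1) b)
      = lep j a + ∑ b' ∈ Finset.range b, p (j+1) (Function.update a (j+1) b') := by
    intro j a b
    rw [hlepsucc]
    congr 1
    · exact hlepcongr j _ a (fun k hk => Function.update_of_ne (by omega) _ _)
    · rw [Function.update_self]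
      refine Finset.sum_congr rfl (fun b' _ => ?_)
      congr 1
      rw [Function.update_idem]
  have hpchildcongr : ∀ j a b, p (j+1) (Function.update (Function.update a (j+1) b) (j+1) b)
      = p (j+1) (Function.update a (j+1) b) := by
    intro j a b
    rw [Function.update_idem]
  have hIvsplit : ∀ j a, (⋃ b ∈ Finset.range (Nc (j+1)), Iv (j+1) (Function.update a (j+1) b))
      = Iv j a := by
    intro j a
    have := tile_union (lep j a) (fun b => p (j+1) (Function.update a (j+1) b))
      (fun b => hp0 _ _) (Nc (j+1))
    rw [hIvdef]
    dsimp only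
    calc (⋃ b ∈ Finset.range (Nc (j+1)),
            Ico (lep (j+1) (Function.update a (j+1) b))
              (lep (j+1) (Function.update a (j+1) b) + p (j+1) (Function.update a (j+1) b)))
        = ⋃ b ∈ Finset.range (Nc (j+1)),
            Ico (lep j a + ∑ k ∈ Finset.range b, p (j+1) (Function.update a (j+1) k))
              (lep j a + ∑ k ∈ Finset.range b, p (j+1) (Function.update a (j+1) k)
                + p (j+1) (Function.update a (j+1) b)) := by
          refine Set.iUnion₂_congr (fun b _ => ?_)
          rw [hlepchild]
      _ = Ico (lep j a) (lep j a + ∑ b ∈ Finset.range (Nc (j+1)), p (j+1) (Function.update a (j+1) b)) := this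
      _ = Ico (lep j a) (lep j a + p j a) := by rw [← hchild]
  have hIvsubparent : ∀ j a, a ∈ W (j+1) → Iv (j+1) a ⊆ Iv j a := by
    intro j a ha
    have h1 := (hWmem (j+1) a).mp ha
    have hsum : (∑ b ∈ Finset.range (a (j+1)), p (j+1) (Function.update a (j+1) b))
        + p (j+1) a ≤ p j a := by
      have e1 : (∑ b ∈ Finset.range (a (j+1)), p (j+1) (Function.update a (j+1) b))
          + p (j+1) a = ∑ b ∈ Finset.range (a (j+1) + 1), p (j+1) (Function.update a (j+1) b) := by
        rw [Finset.sum_range_succ, Function.update_eq_self]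
      rw [e1, hchild j a]
      refine Finset.sum_le_sum_of_subset_of_nonneg ?_ (fun b _ _ => hp0 _ _)
      exact Finset.range_subset_range.mpr (h1.1 (j+1) le_rfl)
    rw [hIvdef]
    dsimp only
    apply Set.Ico_subset_Ico
    · rw [hlepsucc]
      have : 0 ≤ ∑ b ∈ Finset.range (a (j+1)), p (j+1) (Function.update a (j+1) b) :=
        Finset.sum_nonneg (fun b _ => hp0 _ _)
      linarith
    · rw [hlepsucc]
      linarith
  -- truncation
  have htruncmem : ∀ j a, a ∈ W (j+1) → (fun k => if k ≤ j then a k else 0) ∈ W j := by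
    intro j a ha
    have h1 := (hWmem (j+1) a).mp ha
    rw [hWmem]
    constructor
    · intro k hk
      rw [if_pos hk]
      exact h1.1 k (by omega)
    · intro k hk
      rw [if_neg (by omega : ¬ k ≤ j)]
  have hIvtrunc : ∀ j a, Iv j a = Iv j (fun k => if k ≤ j then a k else 0) := by
    intro j a
    rw [hIvdef]
    dsimp only
    rw [hlepcongr j a _ (fun k hk => (if_pos hk).symm),
      hpcongr j a _ (hcellcongr j a _ (fun k hk => (if_pos hk).symm))]
  have hcelltrunc : ∀ j a, cell j a = cell j (fun k => if k ≤ j then a k else 0) :=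
    fun j a => hcellcongr j a _ (fun k hk => (if_pos hk).symm)
  -- canonical base codes
  have hWsucc : ∀ j a b, a ∈ W j → b < Nc (j+1) → Function.update a (j+1) b ∈ W (j+1) := by
    intro j a b ha hb
    have h1 := (hWmem j a).mp ha
    rw [hWmem]
    constructor
    · intro k hk
      by_cases hkj : k = j + 1
      · subst hkj; rw [Function.update_self]; exact hb
      · rw [Function.update_of_ne hkj]; exact h1.1 k (by omega)
    · intro k hk
      rw [Function.update_of_ne (by omega)]
      exact h1.2 k (by omega)
  have hupdself : ∀ j a, a ∈ W (j+1) →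
      Function.update (fun k => if k ≤ j then a k else 0) (j+1) (a (j+1)) = a := by
    intro j a ha
    have h1 := (hWmem (j+1) a).mp ha
    funext k
    by_cases hkj : k = j + 1
    · subst hkj; rw [Function.update_self]
    · rw [Function.update_of_ne hkj]
      by_cases hk : k ≤ j
      · rw [if_pos hk]
      · rw [if_neg hk, h1.2 k (by omega)]
  -- tiling of [0, M₀)
  have htile : ∀ j, (⋃ a ∈ W j, Iv j a) = Ico 0 M₀ ∧
      (∀ a a', a ∈ W j → a' ∈ W j → a ≠ a' → Disjoint (Iv j a) (Iv j a')) := by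
    intro j
    induction j with
    | zero =>
      set canon : ℕ → (ℕ → ℕ) := fun b k => if k = 0 then b else 0 with hcanon
      have hcanonmem : ∀ b, b < Nc 0 → canon b ∈ W 0 := by
        intro b hb
        rw [hWmem]
        constructor
        · intro k hk
          have : k = 0 := by omega
          subst this
          simpa [hcanon] using hb
        · intro k hk
          simp only [hcanon]
          rw [if_neg (by omega : ¬ k = 0)]
      have hWcanon : ∀ a, a ∈ W 0 → a = canon (a 0) := by
        intro a ha
        have h1 := (hWmem 0 a).mp ha
        funext k
        rcases Nat.eq_zero_or_pos k with hk | hk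
        · subst hk; simp [hcanon]
        · rw [h1.2 k hk]; simp only [hcanon]; rw [if_neg (by omega : ¬ k = 0)]
      have hupd0 : ∀ (a : ℕ → ℕ) (b : ℕ), a ∈ W 0 → Function.update a 0 b = canon b := by
        intro a b ha
        have h1 := (hWmem 0 a).mp ha
        funext k
        rcases Nat.eq_zero_or_pos k with hk | hk
        · subst hk; rw [Function.update_self]; simp [hcanon]
        · rw [Function.update_of_ne (by omega), h1.2 k hk]
          simp only [hcanon]
          rw [if_neg (by omega : ¬ k = 0)]
      have hlep0 : ∀ a, a ∈ W 0 → lep 0 a = ∑ b ∈ Finset.range (a 0), p 0 (canon b) := by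
        intro a ha
        rw [hlepdef]
        dsimp only
        rw [Finset.range_one, Finset.sum_singleton]
        exact Finset.sum_congr rfl (fun b _ => by rw [hupd0 a b ha])
      have hsumM : ∑ b ∈ Finset.range (Nc 0), p 0 (canon b) = M₀ := by
        have hq : ∀ i, ∑ b ∈ Finset.range (Nc 0), (μ i (cell 0 (canon b))).toReal
            = (μ i K).toReal := by
          intro i
          have hmeas := measure_biUnion_finset (μ := μ i) (s := Finset.range (Nc 0))
            (f := fun b => cell 0 (canon b))
            (fun b _ b' _ hne => by
              show Disjoint (cell 0 (canon b)) (cell 0 (canon b'))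
              rw [hcell0, hcell0]
              refine hrcdisj 0 _ _ ?_
              simp only [hcanon]
              simpa using hne)
            (fun b _ => hcellmeas _ _)
          have hcov : (⋃ b ∈ Finset.range (Nc 0), cell 0 (canon b)) = K := by
            have hcb : ∀ b : ℕ, cell 0 (canon b) = rc 0 b := by
              intro b; rw [hcell0]; simp [hcanon]
            exact (Set.iUnion₂_congr (fun b _ => hcb b)).trans (hrccover 0)
          rw [hcov] at hmeas
          rw [hmeas, ENNReal.toReal_sum (fun b _ => measure_ne_top _ _)]
        refine tendsto_nhds_unique (tendsto_finset_sum _ fun b _ => hptend 0 (canon b)) ?_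
        exact hM₀tend.congr (fun i => (hq i).symm)
      have hIvcanon : ∀ a, a ∈ W 0 → Iv 0 a =
          Ico ((0:ℝ) + ∑ b ∈ Finset.range (a 0), p 0 (canon b))
            ((0:ℝ) + ∑ b ∈ Finset.range (a 0), p 0 (canon b) + p 0 (canon (a 0))) := by
        intro a ha
        rw [hIvdef]
        dsimp only
        rw [hlep0 a ha, zero_add, hpcongr 0 a _ (congrArg (cell 0) (hWcanon a ha))]
      constructor
      · have htu := tile_union 0 (fun b => p 0 (canon b)) (fun b => hp0 _ _) (Nc 0)
        rw [hsumM, zero_add] at htu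
        rw [← htu]
        apply Subset.antisymm
        · refine iUnion₂_subset (fun a ha => ?_)
          rw [hIvcanon a ha]
          have ha0 : a 0 < Nc 0 := (hWmem 0 a).mp ha |>.1 0 le_rfl
          intro x hx
          rw [mem_iUnion₂]
          exact ⟨a 0, Finset.mem_range.mpr ha0, hx⟩
        · refine iUnion₂_subset (fun b hb => ?_)
          have hc := hcanonmem b (Finset.mem_range.mp hb)
          have : Ico ((0:ℝ) + ∑ k ∈ Finset.range b, p 0 (canon k))
              ((0:ℝ) + ∑ k ∈ Finset.range b, p 0 (canon k) + p 0 (canon b)) = Iv 0 (canon b) := by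
            rw [hIvcanon _ hc]
            have hb0 : (canon b) 0 = b := by simp [hcanon]
            rw [hb0]
          rw [this]
          intro x hx
          rw [mem_iUnion₂]
          exact ⟨canon b, hc, hx⟩
      · intro a a' ha ha' hne
        rw [hIvcanon a ha, hIvcanon a' ha']
        have hne0 : a 0 ≠ a' 0 := by
          intro h
          apply hne
          rw [hWcanon a ha, hWcanon a' ha', h]
        rcases lt_or_gt_of_ne hne0 with h | h
        · exact tile_disj 0 (fun b => p 0 (canon b)) (fun b => hp0 _ _) h
        · exact (tile_disj 0 (fun b => p 0 (canon b)) (fun b => hp0 _ _) h).symm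
    | succ j ih =>
      constructor
      · apply Subset.antisymm
        · refine iUnion₂_subset (fun a ha => ?_)
          refine ((hIvsubparent j a ha).trans ?_)
          rw [hIvtrunc j a, ← ih.1]
          exact subset_biUnion_of_mem (htruncmem j a ha)
        · intro x hx
          rw [← ih.1] at hx
          rw [mem_iUnion₂] at hx
          obtain ⟨a, ha, hxa⟩ := hx
          rw [← hIvsplit j a] at hxa
          rw [mem_iUnion₂] at hxa
          obtain ⟨b, hb, hxb⟩ := hxa
          rw [mem_iUnion₂]
          exact ⟨Function.update a (j+1) b, hWsucc j a b ha (Finset.mem_range.mp hb), hxb⟩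
      · intro a a' ha ha' hne
        by_cases htr : (fun k => if k ≤ j then a k else 0) = (fun k => if k ≤ j then a' k else 0)
        · -- same parent
          have hupa := hupdself j a ha
          have hupa' := hupdself j a' ha'
          have hbne : a (j+1) ≠ a' (j+1) := by
            intro h
            apply hne
            rw [← hupa, ← hupa', htr, h]
          have e1 := hlepchild j (fun k => if k ≤ j then a k else 0) (a (j+1))
          rw [hupa] at e1
          have e1' := hlepchild j (fun k => if k ≤ j then a k else 0) (a' (j+1))
          rw [htr, hupa'] at e1'
          have hqa : p (j+1) (Function.update (fun k => if k ≤ j then a k else 0) (j+1) (a (j+1)))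
              = p (j+1) a := by rw [hupa]
          have hqa' : p (j+1) (Function.update (fun k => if k ≤ j then a k else 0) (j+1) (a' (j+1)))
              = p (j+1) a' := by rw [htr, hupa']
          have hIva : Iv (j+1) a = Ico
              (lep j (fun k => if k ≤ j then a k else 0)
                + ∑ b ∈ Finset.range (a (j+1)),
                    p (j+1) (Function.update (fun k => if k ≤ j then a k else 0) (j+1) b))
              (lep j (fun k => if k ≤ j then a k else 0)
                + ∑ b ∈ Finset.range (a (j+1)),
                    p (j+1) (Function.update (fun k => if k ≤ j then a k else 0) (j+1) b)
                + p (j+1) (Function.update (fun k => if k ≤ j then a k else 0) (j+1) (a (j+1)))) := by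
            rw [hIvdef]
            dsimp only
            rw [e1, hqa]
          have hIva' : Iv (j+1) a' = Ico
              (lep j (fun k => if k ≤ j then a k else 0)
                + ∑ b ∈ Finset.range (a' (j+1)),
                    p (j+1) (Function.update (fun k => if k ≤ j then a k else 0) (j+1) b))
              (lep j (fun k => if k ≤ j then a k else 0)
                + ∑ b ∈ Finset.range (a' (j+1)),
                    p (j+1) (Function.update (fun k => if k ≤ j then a k else 0) (j+1) b)
                + p (j+1) (Function.update (fun k => if k ≤ j then a k else 0) (j+1) (a' (j+1)))) := by
            rw [hIvdef]
            dsimp only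
            rw [e1', hqa', htr]
          rw [hIva, hIva']
          rcases lt_or_gt_of_ne hbne with h | h
          · exact tile_disj _ _ (fun b => hp0 _ _) h
          · exact (tile_disj _ _ (fun b => hp0 _ _) h).symm
        · refine Set.disjoint_of_subset ?_ ?_
            (ih.2 _ _ (htruncmem j a ha) (htruncmem j a' ha') htr)
          · rw [← hIvtrunc j a]; exact hIvsubparent j a ha
          · rw [← hIvtrunc j a']; exact hIvsubparent j a' ha'
  have hcellmono : ∀ j a, cell (j+1) a ⊆ cell j a := by
    intro j a
    rw [hcellsucc]
    exact inter_subset_left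
  have hIvsubIco : ∀ j a, a ∈ W j → Iv j a ⊆ Ico 0 M₀ := by
    intro j a ha
    rw [← (htile j).1]
    intro x hx
    rw [mem_iUnion₂]
    exact ⟨a, ha, hx⟩
  have huniq : ∀ j (x : ℝ) a a', a ∈ W j → a' ∈ W j → x ∈ Iv j a → x ∈ Iv j a' → a = a' := by
    intro j x a a' ha ha' hxa hxa'
    by_contra hne
    exact Set.disjoint_left.mp ((htile j).2 a a' ha ha' hne) hxa hxa'
  have hcodeex : ∀ j (x : ℝ), x ∈ Ico (0:ℝ) M₀ → ∃ a, a ∈ W j ∧ x ∈ Iv j a := by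
    intro j x hx
    have h2 := (htile j).1.symm.subset hx
    rw [mem_iUnion₂] at h2
    obtain ⟨a, ha, hxa⟩ := h2
    exact ⟨a, ha, hxa⟩
  have hpIvpos : ∀ j a (x : ℝ), x ∈ Iv j a → (cell j a).Nonempty := by
    intro j a x hx
    rw [Set.nonempty_iff_ne_empty]
    intro hemp
    have hp := hpempty j a hemp
    rw [hIvdef] at hx
    dsimp only at hx
    rw [hp, add_zero] at hx
    exact (lt_irrefl _ (lt_of_le_of_lt hx.1 hx.2)).elim
  set ξ : ℕ → (ℕ → ℕ) → Ω := fun j a => if h : (cell j a).Nonempty then h.choose else xs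
    with hξdef
  have hξmem : ∀ j a, (cell j a).Nonempty → ξ j a ∈ cell j a := by
    intro j a h
    rw [hξdef]
    dsimp only
    rw [dif_pos h]
    exact h.choose_spec
  set ψ : ℕ → ℝ → Ω := fun j x => if h : ∃ a, a ∈ W j ∧ x ∈ Iv j a then ξ j h.choose else xs
    with hψdef
  have hψeq : ∀ j (x : ℝ) a, a ∈ W j → x ∈ Iv j a → ψ j x = ξ j a := by
    intro j x a ha hx
    have hex : ∃ a, a ∈ W j ∧ x ∈ Iv j a := ⟨a, ha, hx⟩
    rw [hψdef]
    dsimp only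
    rw [dif_pos hex]
    congr 1
    exact huniq j x _ a hex.choose_spec.1 ha hex.choose_spec.2 hx
  have hψout : ∀ j (x : ℝ), x ∉ Ico (0:ℝ) M₀ → ψ j x = xs := by
    intro j x hx
    rw [hψdef]
    dsimp only
    rw [dif_neg]
    rintro ⟨a, ha, hxa⟩
    exact hx (hIvsubIco j a ha hxa)
  have hψcell : ∀ j (x : ℝ) a, a ∈ W j → x ∈ Iv j a → ψ j x ∈ cell j a := by
    intro j x a ha hx
    rw [hψeq j x a ha hx]
    exact hξmem j a (hpIvpos j a x hx)
  have hψK : ∀ j (x : ℝ), ψ j x ∈ K := by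
    intro j x
    by_cases hx : ∃ a, a ∈ W j ∧ x ∈ Iv j a
    · obtain ⟨a, ha, hxa⟩ := hx
      exact hcellK j a (hψcell j x a ha hxa)
    · rw [hψdef]
      dsimp only
      rw [dif_neg hx]
      exact hxs
  have hchain : ∀ j d (x : ℝ) a a', a ∈ W j → x ∈ Iv j a → a' ∈ W (j+d) → x ∈ Iv (j+d) a' →
      cell (j+d) a' ⊆ cell j a := by
    intro j d
    induction d with
    | zero =>
      intro x a a' ha hxa ha' hxa'
      rw [huniq j x a a' ha ha' hxa hxa']
    | succ d ihd =>
      intro x a a' ha hxa ha' hxa'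
      have ht1 := htruncmem (j+d) a' ha'
      have ht2 : x ∈ Iv (j+d) (fun k => if k ≤ j+d then a' k else 0) := by
        rw [← hIvtrunc]
        exact hIvsubparent (j+d) a' ha' hxa'
      refine Subset.trans ?_ (ihd x a _ ha hxa ht1 ht2)
      exact (hcellmono (j+d) a').trans (Set.Subset.trans Subset.rfl
        (le_of_eq (hcelltrunc (j+d) a')))
  have hψdist : ∀ (N n m : ℕ) (x : ℝ), N ≤ n → N ≤ m → dist (ψ n x) (ψ m x) ≤ dd N := by
    intro N n m x hn hm
    by_cases hx : x ∈ Ico (0:ℝ) M₀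
    · obtain ⟨aN, haN, hxaN⟩ := hcodeex N x hx
      obtain ⟨an, han, hxan⟩ := hcodeex n x hx
      obtain ⟨am, ham, hxam⟩ := hcodeex m x hx
      have h1 : ψ n x ∈ cell N aN := by
        obtain ⟨d, rfl⟩ := Nat.exists_eq_add_of_le hn
        exact hchain N d x aN an haN hxaN han hxan (hψcell _ x an han hxan)
      have h2 : ψ m x ∈ cell N aN := by
        obtain ⟨d, rfl⟩ := Nat.exists_eq_add_of_le hm
        exact hchain N d x aN am haN hxaN ham hxam (hψcell _ x am ham hxam)
      exact hrcdiam N (aN N) _ (hcellsub N aN N le_rfl h1) _ (hcellsub N aN N le_rfl h2)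
    · rw [hψout n x hx, hψout m x hx]
      simpa using hdd0 N
  have hcauchy : ∀ x : ℝ, CauchySeq (fun j => ψ j x) := fun x =>
    cauchySeq_of_le_tendsto_0 dd (fun n m N hn hm => hψdist N n m x hn hm) hddto
  have hφex : ∀ x : ℝ, ∃ y, Tendsto (fun j => ψ j x) atTop (𝓝 y) := fun x =>
    cauchySeq_tendsto_of_complete (hcauchy x)
  choose φ hφ using hφex
  have hφK : ∀ x, φ x ∈ K := fun x =>
    hK.isClosed.mem_of_tendsto (hφ x) (Filter.Eventually.of_forall (fun j => hψK j x))
  have hIvmeas : ∀ j a, MeasurableSet (Iv j a) := by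
    intro j a
    rw [hIvdef]
    exact measurableSet_Ico
  have hψmeas : ∀ j, Measurable (ψ j) := by
    intro j s hs
    have hrepr : ψ j ⁻¹' s =
        (⋃ a ∈ (W j).filter (fun a => ξ j a ∈ s), Iv j a) ∪
        ({x : ℝ | x ∉ Ico (0:ℝ) M₀ ∧ xs ∈ s}) := by
      ext x
      simp only [mem_preimage, mem_union, mem_setOf_eq]
      by_cases hx : x ∈ Ico (0:ℝ) M₀
      · obtain ⟨a, ha, hxa⟩ := hcodeex j x hx
        constructor
        · intro hmem
          left
          rw [mem_iUnion₂]
          refine ⟨a, ?_, hxa⟩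
          rw [Finset.mem_filter]
          exact ⟨ha, by rwa [← hψeq j x a ha hxa]⟩
        · rintro (h | h)
          · rw [mem_iUnion₂] at h
            obtain ⟨a', ha', hxa'⟩ := h
            rw [Finset.mem_filter] at ha'
            rw [hψeq j x a' ha'.1 hxa']
            exact ha'.2
          · exact absurd hx h.1
      · rw [hψout j x hx]
        constructor
        · intro h
          exact Or.inr ⟨hx, h⟩
        · rintro (h | h)
          · rw [mem_iUnion₂] at h
            obtain ⟨a', ha', hxa'⟩ := h
            rw [Finset.mem_filter] at ha'
            exact absurd (hIvsubIco j a' ha'.1 hxa') hx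
          · exact h.2
    rw [hrepr]
    refine MeasurableSet.union ?_ ?_
    · exact MeasurableSet.biUnion (Finset.countable_toSet _) (fun a _ => hIvmeas j a)
    · by_cases hxss : xs ∈ s
      · have : {x : ℝ | x ∉ Ico (0:ℝ) M₀ ∧ xs ∈ s} = (Ico (0:ℝ) M₀)ᶜ := by
          ext x; simp [hxss]
        rw [this]
        exact measurableSet_Ico.compl
      · have : {x : ℝ | x ∉ Ico (0:ℝ) M₀ ∧ xs ∈ s} = ∅ := by
          ext x; simp [hxss]
        rw [this]
        exact MeasurableSet.empty
  have hφmeas : Measurable φ :=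
    measurable_of_tendsto_metrizable hψmeas (tendsto_pi_nhds.mpr hφ)
  have hφclosure : ∀ j (x : ℝ) a, a ∈ W j → x ∈ Iv j a → φ x ∈ closure (cell j a) := by
    intro j x a ha hx
    refine mem_closure_of_tendsto (hφ x) ?_
    rw [eventually_atTop]
    refine ⟨j, fun j' hj' => ?_⟩
    obtain ⟨d, rfl⟩ := Nat.exists_eq_add_of_le hj'
    have hxI : x ∈ Ico (0:ℝ) M₀ := hIvsubIco j a ha hx
    obtain ⟨a', ha', hxa'⟩ := hcodeex (j+d) x hxI
    exact hchain j d x a a' ha hx ha' hxa' (hψcell (j+d) x a' ha' hxa')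
  set νm : Measure Ω := (volume.restrict (Ico 0 M₀)).map φ with hνdef
  have hν1 : IsFiniteMeasure νm := by
    constructor
    rw [hνdef, Measure.map_apply hφmeas MeasurableSet.univ]
    simp only [preimage_univ]
    rw [Measure.restrict_apply_univ, Real.volume_Ico]
    exact ENNReal.ofReal_lt_top
  have hν2 : νm Kᶜ = 0 := by
    rw [hνdef, Measure.map_apply hφmeas hK.isClosed.measurableSet.compl]
    have hpre : φ ⁻¹' Kᶜ = ∅ := by
      ext x
      simp [hφK x]
    rw [hpre]
    simp
  refine ⟨νm, hν1, hν2, ?_⟩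
  intro g hg
  obtain ⟨Cg, hCg⟩ := hK.exists_bound_of_continuousOn hg.continuousOn
  haveI hresfin : IsFiniteMeasure (volume.restrict (Ico (0:ℝ) M₀)) := by
    constructor
    rw [Measure.restrict_apply_univ, Real.volume_Ico]
    exact ENNReal.ofReal_lt_top
  have hgφmeas : Measurable fun x : ℝ => g (φ x) := hg.measurable.comp hφmeas
  have hνint : ∫ x, g x ∂νm = ∫ x in Ico (0:ℝ) M₀, g (φ x) := by
    rw [hνdef, integral_map hφmeas.aemeasurable hg.aestronglyMeasurable]
  have hintφ : IntegrableOn (fun x : ℝ => g (φ x)) (Ico (0:ℝ) M₀) volume := by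
    refine Integrable.mono' (integrable_const Cg) hgφmeas.aestronglyMeasurable ?_
    exact Filter.Eventually.of_forall (fun x => hCg _ (hφK x))
  have hintμ : ∀ i, Integrable g (μ i) := fun i => by
    haveI := hfin i
    exact integrable_of_support hK (hsupp i) hg
  have hι : Nonempty ι := Filter.nonempty_of_neBot ↑Uf
  obtain ⟨i0⟩ := hι
  have hM0' : 0 ≤ M := le_trans ENNReal.toReal_nonneg (hM i0)
  rw [Metric.tendsto_nhds]
  intro ε' hε'
  have hMM0 : 0 < M + M₀ + 2 := by linarith
  set ε := ε' / (M + M₀ + 2) with hεdef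
  have hε : 0 < ε := div_pos hε' hMM0
  obtain ⟨η, hη, hUC⟩ := Metric.uniformContinuousOn_iff.mp
    (hK.uniformContinuousOn_of_continuous hg.continuousOn) ε hε
  obtain ⟨j, hj⟩ := (hddto.eventually (gt_mem_nhds hη)).exists
  have hgdist : ∀ u v : Ω, u ∈ K → v ∈ K → dist u v < η → ‖g u - g v‖ ≤ ε := by
    intro u v hu hv hd
    have h2 := hUC u hu v hv hd
    rw [Real.dist_eq] at h2
    rw [Real.norm_eq_abs]
    exact le_of_lt h2
  -- per cell estimate for the measures μ i
  have hcellbound : ∀ a (x : Ω), a ∈ W j → x ∈ cell j a → ‖g x - g (ξ j a)‖ ≤ ε := by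
    intro a x ha hxc
    have hξc := hξmem j a ⟨x, hxc⟩
    have hdist : dist x (ξ j a) ≤ dd j :=
      hrcdiam j (a j) x (hcellsub j a j le_rfl hxc) (ξ j a) (hcellsub j a j le_rfl hξc)
    exact hgdist x (ξ j a) (hcellK j a hxc) (hcellK j a hξc) (lt_of_le_of_lt hdist hj)
  have est1 : ∀ i, |(∫ x, g x ∂(μ i)) - ∑ a ∈ W j, g (ξ j a) * (μ i (cell j a)).toReal|
      ≤ ε * M := by
    intro i
    haveI := hfin i
    have hae : ∀ᵐ x ∂(μ i), x ∈ K := by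
      rw [ae_iff]
      exact hsupp i
    have hsplit0 : ∫ x, g x ∂(μ i) = ∑ a ∈ W j, ∫ x in cell j a, g x ∂(μ i) := by
      conv_lhs => rw [← Measure.restrict_eq_self_of_ae_mem hae]
      rw [show (μ i).restrict K = (μ i).restrict (⋃ a ∈ W j, cell j a) by rw [hWcover j]]
      exact integral_biUnion_finset (W j) (fun a _ => hcellmeas j a)
        (fun a ha a' ha' hne => hWdisj j a a' ha ha' hne)
        (fun a _ => (hintμ i).integrableOn)
    have hpercell : ∀ a ∈ W j,
        |(∫ x in cell j a, g x ∂(μ i)) - g (ξ j a) * (μ i (cell j a)).toReal|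
          ≤ ε * (μ i (cell j a)).toReal := by
      intro a ha
      have hsub : (∫ x in cell j a, g x ∂(μ i)) - g (ξ j a) * (μ i (cell j a)).toReal
          = ∫ x in cell j a, (g x - g (ξ j a)) ∂(μ i) := by
        rw [integral_sub ((hintμ i).integrableOn)
          ((integrableOn_const_iff).mpr (Or.inr (measure_lt_top _ _)))]
        rw [setIntegral_const, smul_eq_mul, mul_comm, measureReal_def]
      rw [hsub, ← Real.norm_eq_abs]
      exact norm_setIntegral_le_of_norm_le_const (measure_lt_top _ _)
        (fun x hx => hcellbound a x ha hx)
    calc |(∫ x, g x ∂(μ i)) - ∑ a ∈ W j, g (ξ j a) * (μ i (cell j a)).toReal|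
        = |∑ a ∈ W j, ((∫ x in cell j a, g x ∂(μ i)) - g (ξ j a) * (μ i (cell j a)).toReal)| := by
          rw [Finset.sum_sub_distrib, ← hsplit0]
      _ ≤ ∑ a ∈ W j, |(∫ x in cell j a, g x ∂(μ i)) - g (ξ j a) * (μ i (cell j a)).toReal| :=
          Finset.abs_sum_le_sum_abs _ _
      _ ≤ ∑ a ∈ W j, ε * (μ i (cell j a)).toReal := Finset.sum_le_sum (fun a ha => hpercell a ha)
      _ = ε * (μ i K).toReal := by rw [← Finset.mul_sum, hqsumK j i]
      _ ≤ ε * M := by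
        refine mul_le_mul_of_nonneg_left ?_ (le_of_lt hε)
        exact le_trans (ENNReal.toReal_mono (measure_ne_top _ _)
          (measure_mono (subset_univ _))) (hM i)
  -- per interval estimate for ν
  have hIvvol : ∀ a, (volume (Iv j a)).toReal = p j a := by
    intro a
    rw [hIvdef]
    dsimp only
    rw [Real.volume_Ico, add_sub_cancel_left, ENNReal.toReal_ofReal (hp0 j a)]
  have est2 : |(∫ x in Ico (0:ℝ) M₀, g (φ x)) - ∑ a ∈ W j, g (ξ j a) * p j a| ≤ ε * M₀ := by
    have hsplit0 : ∫ x in Ico (0:ℝ) M₀, g (φ x) = ∑ a ∈ W j, ∫ x in Iv j a, g (φ x) := by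
      rw [show volume.restrict (Ico (0:ℝ) M₀) = volume.restrict (⋃ a ∈ W j, Iv j a) by
        rw [(htile j).1]]
      exact integral_biUnion_finset (W j) (fun a _ => hIvmeas j a)
        (fun a ha a' ha' hne => (htile j).2 a a' ha ha' hne)
        (fun a ha => hintφ.mono_set (hIvsubIco j a ha))
    have hperint : ∀ a ∈ W j,
        |(∫ x in Iv j a, g (φ x)) - g (ξ j a) * p j a| ≤ ε * p j a := by
      intro a ha
      have hbound : ∀ x ∈ Iv j a, ‖g (φ x) - g (ξ j a)‖ ≤ ε := by
        intro x hx
        have hξc := hξmem j a (hpIvpos j a x hx)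
        have hclsub : closure (cell j a) ⊆ {u : Ω | dist u (ξ j a) ≤ dd j} := by
          refine closure_minimal ?_ (isClosed_le (continuous_id.dist continuous_const)
            continuous_const)
          intro u hu
          exact hrcdiam j (a j) u (hcellsub j a j le_rfl hu) (ξ j a)
            (hcellsub j a j le_rfl hξc)
        have hdist : dist (φ x) (ξ j a) ≤ dd j := hclsub (hφclosure j x a ha hx)
        exact hgdist (φ x) (ξ j a) (hφK x) (hcellK j a hξc) (lt_of_le_of_lt hdist hj)
      have hsub : (∫ x in Iv j a, g (φ x)) - g (ξ j a) * p j a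
          = ∫ x in Iv j a, (g (φ x) - g (ξ j a)) := by
        rw [integral_sub (hintφ.mono_set (hIvsubIco j a ha))
          ((integrableOn_const_iff).mpr (Or.inr ?_))]
        · rw [setIntegral_const, smul_eq_mul, mul_comm, measureReal_def, hIvvol]
        · rw [hIvdef]
          dsimp only
          rw [Real.volume_Ico]
          exact ENNReal.ofReal_lt_top
      rw [hsub, ← Real.norm_eq_abs]
      calc ‖∫ x in Iv j a, (g (φ x) - g (ξ j a))‖
          ≤ ε * (volume (Iv j a)).toReal := by
            refine norm_setIntegral_le_of_norm_le_const ?_ hbound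
            · rw [hIvdef]
              dsimp only
              rw [Real.volume_Ico]
              exact ENNReal.ofReal_lt_top
        _ = ε * p j a := by rw [hIvvol]
    calc |(∫ x in Ico (0:ℝ) M₀, g (φ x)) - ∑ a ∈ W j, g (ξ j a) * p j a|
        = |∑ a ∈ W j, ((∫ x in Iv j a, g (φ x)) - g (ξ j a) * p j a)| := by
          rw [Finset.sum_sub_distrib, ← hsplit0]
      _ ≤ ∑ a ∈ W j, |(∫ x in Iv j a, g (φ x)) - g (ξ j a) * p j a| :=
          Finset.abs_sum_le_sum_abs _ _
      _ ≤ ∑ a ∈ W j, ε * p j a := Finset.sum_le_sum (fun a ha => hperint a ha)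
      _ = ε * M₀ := by rw [← Finset.mul_sum, hpsum j]
  have est3 : Tendsto (fun i => ∑ a ∈ W j, g (ξ j a) * (μ i (cell j a)).toReal) ↑Uf
      (𝓝 (∑ a ∈ W j, g (ξ j a) * p j a)) :=
    tendsto_finset_sum _ (fun a _ => (hptend j a).const_mul _)
  filter_upwards [Metric.tendsto_nhds.mp est3 ε hε] with i hi
  rw [Real.dist_eq] at hi ⊢
  rw [hνint]
  set A := ∫ x, g x ∂(μ i) with hA
  set B := ∑ a ∈ W j, g (ξ j a) * (μ i (cell j a)).toReal with hB
  set C := ∑ a ∈ W j, g (ξ j a) * p j a with hC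
  set Dv := ∫ x in Ico (0:ℝ) M₀, g (φ x) with hDv
  have h1 : |A - B| ≤ ε * M := est1 i
  have h2 : |B - C| < ε := hi
  have h3 : |C - Dv| ≤ ε * M₀ := by
    rw [abs_sub_comm]
    exact est2
  have htri : |A - Dv| ≤ |A - B| + |B - C| + |C - Dv| := by
    calc |A - Dv| ≤ |A - C| + |C - Dv| := abs_sub_le A C Dv
      _ ≤ (|A - B| + |B - C|) + |C - Dv| := by
          have := abs_sub_le A B C
          linarith
  have hεsum : ε * M + ε + ε * M₀ < ε' := by
    have heq : ε * (M + M₀ + 2) = ε' := by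
      rw [hεdef]
      field_simp
    nlinarith [hε, hM0'.trans_lt (lt_of_le_of_lt (le_refl M) (lt_add_of_pos_right M (by linarith [hM₀0] : (0:ℝ) < M₀ + 2)))]
  linarith

/-- lower semicontinuity of the value `p*` of the measure LP (with value
`+∞`, i.e. `⊤` in `EReal`, where the LP is infeasible, since `sInf ∅ = ⊤`). -/
theorem measure_LP_value_lsc
    {n m : ℕ} (X XT : Set (Fin n → ℝ)) (U : Set (Fin m → ℝ))
    (hX : IsCompact X) (hXT : IsCompact XT) (hXTX : XT ⊆ X) (hU : IsCompact U)
    (l : (Fin n → ℝ) → (Fin m → ℝ) → ℝ)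
    (hl : Continuous fun p : (Fin n → ℝ) × (Fin m → ℝ) => l p.1 p.2)
    (lT : (Fin n → ℝ) → ℝ) (hlT : Continuous lT)
    (f : (Fin n → ℝ) → (Fin m → ℝ) → (Fin n → ℝ))
    (hf : Continuous fun p : (Fin n → ℝ) × (Fin m → ℝ) => f p.1 p.2)
    (T : ℝ) (hT : 0 ≤ T)
    (pstar : ℝ × (Fin n → ℝ) → EReal)
    (hpstar : ∀ t₀ x₀, pstar (t₀, x₀) =
      sInf {c : EReal |
        ∃ (μ : Measure (ℝ × (Fin n → ℝ) × (Fin m → ℝ)))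
          (μT : Measure (ℝ × (Fin n → ℝ))),
          IsFiniteMeasure μ ∧ IsFiniteMeasure μT ∧
          (∀ᵐ p ∂μ, p.1 ∈ Icc t₀ T ∧ p.2.1 ∈ X ∧ p.2.2 ∈ U) ∧
          (∀ᵐ q ∂μT, q.1 = T ∧ q.2 ∈ XT) ∧
          (∀ w : ℝ × (Fin n → ℝ) → ℝ, ContDiff ℝ 1 w →
            (∫ q, w q ∂μT) - w (t₀, x₀) =
              ∫ p, fderiv ℝ w (p.1, p.2.1) (1, f p.2.1 p.2.2) ∂μ) ∧
          c = (((∫ p, l p.2.1 p.2.2 ∂μ) + ∫ q, lT q.2 ∂μT : ℝ) : EReal)}) :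
    LowerSemicontinuousOn pstar (Icc (0:ℝ) T ×ˢ X) := by

  classical
  intro z₀ hz₀ y hy
  by_contra hcon
  rw [Filter.not_eventually] at hcon
  set S : Set (ℝ × (Fin n → ℝ)) := Icc (0:ℝ) T ×ˢ X with hSdef
  obtain ⟨c0, hc1, hc2⟩ := exists_between hy
  have hc0top : c0 ≠ ⊤ := ne_top_of_lt hc2
  have hc0bot : c0 ≠ ⊥ := ne_bot_of_gt hc1
  set r := c0.toReal with hrdef
  have hrc : (r : EReal) = c0 := EReal.coe_toReal hc0top hc0bot
  -- the ultrafilter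
  have hneb : (𝓝[S] z₀ ⊓ 𝓟 {z | ¬ y < pstar z}).NeBot := by
    rw [inf_principal_neBot_iff]
    intro V hV
    obtain ⟨z, hz1, hz2⟩ := (hcon.and_eventually (eventually_of_mem hV (fun _ h => h))).exists
    exact ⟨z, hz2, hz1⟩
  set F := Ultrafilter.of (𝓝[S] z₀ ⊓ 𝓟 {z | ¬ y < pstar z}) with hFdef
  have hFle : ↑F ≤ 𝓝[S] z₀ ⊓ 𝓟 {z | ¬ y < pstar z} := Ultrafilter.of_le _
  have hF1 : ↑F ≤ 𝓝[S] z₀ := hFle.trans inf_le_left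
  have hF2 : ∀ᶠ z in ↑F, pstar z ≤ y := by
    have h2 : {z | ¬ y < pstar z} ∈ F := le_principal_iff.mp (hFle.trans inf_le_right)
    filter_upwards [h2] with z hz using not_lt.mp hz
  have hFS : ∀ᶠ z in ↑F, z ∈ S := hF1 self_mem_nhdsWithin
  have hFnhds : ↑F ≤ 𝓝 z₀ := hF1.trans nhdsWithin_le_nhds
  -- compact supports
  set K₁ : Set (ℝ × (Fin n → ℝ) × (Fin m → ℝ)) := Icc (0:ℝ) T ×ˢ (X ×ˢ U) with hK₁def
  have hK₁ : IsCompact K₁ := isCompact_Icc.prod (hX.prod hU)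
  set K₂ : Set (ℝ × (Fin n → ℝ)) := ({T} : Set ℝ) ×ˢ XT with hK₂def
  have hK₂ : IsCompact K₂ := isCompact_singleton.prod hXT
  -- mass derivations
  have hmasses : ∀ (t₀ : ℝ) (x₀ : Fin n → ℝ) (μm : Measure (ℝ × (Fin n → ℝ) × (Fin m → ℝ)))
      (μTm : Measure (ℝ × (Fin n → ℝ))),
      IsFiniteMeasure μm → IsFiniteMeasure μTm →
      (∀ᵐ q ∂μTm, q.1 = T ∧ q.2 ∈ XT) →
      (∀ w : ℝ × (Fin n → ℝ) → ℝ, ContDiff ℝ 1 w →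
        (∫ q, w q ∂μTm) - w (t₀, x₀) = ∫ p, fderiv ℝ w (p.1, p.2.1) (1, f p.2.1 p.2.2) ∂μm) →
      (μTm Set.univ).toReal = 1 ∧ (μm Set.univ).toReal = T - t₀ := by
    intro t₀ x₀ μm μTm hf1 hf2 hsupT hLiou
    have h1 := hLiou (fun _ => (1:ℝ)) contDiff_const
    have hz : ∀ p : ℝ × (Fin n → ℝ) × (Fin m → ℝ),
        fderiv ℝ (fun _ : ℝ × (Fin n → ℝ) => (1:ℝ)) (p.1, p.2.1) (1, f p.2.1 p.2.2) = 0 := by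
      intro p
      rw [fderiv_fun_const]
      simp
    simp only [hz] at h1
    rw [integral_const, integral_zero] at h1
    have hT1 : (μTm Set.univ).toReal = 1 := by
      have := h1
      simp only [smul_eq_mul, mul_one, measureReal_def] at this
      linarith
    refine ⟨hT1, ?_⟩
    have h2 := hLiou (fun q => q.1) contDiff_fst
    have hfd : ∀ p : ℝ × (Fin n → ℝ) × (Fin m → ℝ),
        fderiv ℝ (fun q : ℝ × (Fin n → ℝ) => q.1) (p.1, p.2.1) (1, f p.2.1 p.2.2) = 1 := by
      intro p
      have hfst : HasFDerivAt (fun q : ℝ × (Fin n → ℝ) => q.1)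
          (ContinuousLinearMap.fst ℝ ℝ (Fin n → ℝ)) (p.1, p.2.1) := hasFDerivAt_fst
      rw [hfst.fderiv]
      rfl
    simp only [hfd] at h2
    rw [integral_const] at h2
    have hTint : ∫ q : ℝ × (Fin n → ℝ), q.1 ∂μTm = T := by
      have hc : ∫ q : ℝ × (Fin n → ℝ), q.1 ∂μTm = ∫ _q : ℝ × (Fin n → ℝ), T ∂μTm :=
        integral_congr_ae (hsupT.mono fun q hq => hq.1)
      rw [hc, integral_const, measureReal_def, hT1, one_smul]
    rw [hTint] at h2
    simp only [smul_eq_mul, mul_one, measureReal_def] at h2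
    linarith
  -- the Good predicate and selection
  set Good : (ℝ × (Fin n → ℝ)) →
      Measure (ℝ × (Fin n → ℝ) × (Fin m → ℝ)) × Measure (ℝ × (Fin n → ℝ)) → Prop := fun z pr =>
    IsFiniteMeasure pr.1 ∧ IsFiniteMeasure pr.2 ∧
    (∀ᵐ p ∂pr.1, p.1 ∈ Icc z.1 T ∧ p.2.1 ∈ X ∧ p.2.2 ∈ U) ∧
    (∀ᵐ q ∂pr.2, q.1 = T ∧ q.2 ∈ XT) ∧
    (∀ w : ℝ × (Fin n → ℝ) → ℝ, ContDiff ℝ 1 w →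
      (∫ q, w q ∂pr.2) - w z = ∫ p, fderiv ℝ w (p.1, p.2.1) (1, f p.2.1 p.2.2) ∂pr.1) ∧
    pr.1 K₁ᶜ = 0 ∧ pr.2 K₂ᶜ = 0 ∧
    (pr.1 Set.univ).toReal ≤ T + 1 ∧ (pr.2 Set.univ).toReal ≤ 1 ∧
    (∫ p, l p.2.1 p.2.2 ∂pr.1) + (∫ q, lT q.2 ∂pr.2) < r with hGooddef
  have hGoodex : ∀ z : ℝ × (Fin n → ℝ), z ∈ S → pstar z ≤ y → ∃ pr, Good z pr := by
    intro z hzS hzy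
    have hz01 : (0:ℝ) ≤ z.1 := hzS.1.1
    have hz1T : z.1 ≤ T := hzS.1.2
    have hps : pstar z = pstar (z.1, z.2) := by rw [Prod.mk.eta]
    have hlt : pstar z < (r : EReal) := lt_of_le_of_lt hzy (by rw [hrc]; exact hc1)
    rw [hps, hpstar z.1 z.2] at hlt
    obtain ⟨c, hcmem, hclt⟩ := sInf_lt_iff.mp hlt
    obtain ⟨μm, μTm, hfm, hfTm, haem, haeTm, hLiou, hceq⟩ := hcmem
    rw [hceq] at hclt
    have hcost : (∫ p, l p.2.1 p.2.2 ∂μm) + (∫ q, lT q.2 ∂μTm) < r := by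
      exact_mod_cast hclt
    obtain ⟨hmT, hmμ⟩ := hmasses z.1 z.2 μm μTm hfm hfTm haeTm hLiou
    refine ⟨(μm, μTm), hfm, hfTm, haem, haeTm, ?_, ?_, ?_, ?_, ?_, hcost⟩
    · intro w hw
      have := hLiou w hw
      rwa [Prod.mk.eta] at this
    · -- μm K₁ᶜ = 0
      have hae : ∀ᵐ p ∂μm, p ∈ K₁ := by
        filter_upwards [haem] with p hp
        rw [hK₁def]
        refine ⟨⟨le_trans hz01 hp.1.1, hp.1.2⟩, hp.2.1, hp.2.2⟩
      rw [ae_iff] at hae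
      refine measure_mono_null ?_ hae
      intro p hp
      exact hp
    · -- μTm K₂ᶜ = 0
      have hae : ∀ᵐ q ∂μTm, q ∈ K₂ := by
        filter_upwards [haeTm] with q hq
        rw [hK₂def]
        exact ⟨hq.1, hq.2⟩
      rw [ae_iff] at hae
      refine measure_mono_null ?_ hae
      intro q hq
      exact hq
    · rw [hmμ]; linarith
    · rw [hmT]
  set Φ : (ℝ × (Fin n → ℝ)) →
      Measure (ℝ × (Fin n → ℝ) × (Fin m → ℝ)) × Measure (ℝ × (Fin n → ℝ)) := fun z =>
    if h : ∃ pr, Good z pr then h.choose else (0, 0) with hΦdef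
  have hΦgood : ∀ z, z ∈ S → pstar z ≤ y → Good z (Φ z) := by
    intro z h1 h2
    have hex := hGoodex z h1 h2
    rw [hΦdef]
    dsimp only
    rw [dif_pos hex]
    exact hex.choose_spec
  have hzfin : IsFiniteMeasure (0 : Measure (ℝ × (Fin n → ℝ) × (Fin m → ℝ))) := by
    constructor; simp
  have hzfin2 : IsFiniteMeasure (0 : Measure (ℝ × (Fin n → ℝ))) := by
    constructor; simp
  have hΦfin1 : ∀ z, IsFiniteMeasure (Φ z).1 := by
    intro z
    rw [hΦdef]
    dsimp only
    split
    · next h => exact h.choose_spec.1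
    · exact hzfin
  have hΦfin2 : ∀ z, IsFiniteMeasure (Φ z).2 := by
    intro z
    rw [hΦdef]
    dsimp only
    split
    · next h => exact h.choose_spec.2.1
    · exact hzfin2
  have hΦK1 : ∀ z, (Φ z).1 K₁ᶜ = 0 := by
    intro z
    rw [hΦdef]
    dsimp only
    split
    · next h => exact h.choose_spec.2.2.2.2.2.1
    · simp
  have hΦK2 : ∀ z, (Φ z).2 K₂ᶜ = 0 := by
    intro z
    rw [hΦdef]
    dsimp only
    split
    · next h => exact h.choose_spec.2.2.2.2.2.2.1
    · simp
  have hΦm1 : ∀ z, ((Φ z).1 Set.univ).toReal ≤ T + 1 := by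
    intro z
    rw [hΦdef]
    dsimp only
    split
    · next h => exact h.choose_spec.2.2.2.2.2.2.2.1
    · simp; linarith
  have hΦm2 : ∀ z, ((Φ z).2 Set.univ).toReal ≤ 1 := by
    intro z
    rw [hΦdef]
    dsimp only
    split
    · next h => exact h.choose_spec.2.2.2.2.2.2.2.2.1
    · simp
  obtain ⟨ν, hν1, hν2, hνconv⟩ := exists_weak_limit F (fun z => (Φ z).1) hK₁ hΦfin1 hΦK1 hΦm1
  obtain ⟨νT, hνT1, hνT2, hνTconv⟩ := exists_weak_limit F (fun z => (Φ z).2) hK₂ hΦfin2 hΦK2 hΦm2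
  have hGae : ∀ᶠ z in ↑F, Good z (Φ z) := by
    filter_upwards [hFS, hF2] with z h1 h2 using hΦgood z h1 h2
  have hidt : Tendsto (fun z : ℝ × (Fin n → ℝ) => z) ↑F (𝓝 z₀) := hFnhds
  -- Liouville in the limit
  have hLiouν : ∀ w : ℝ × (Fin n → ℝ) → ℝ, ContDiff ℝ 1 w →
      (∫ q, w q ∂νT) - w z₀ = ∫ p, fderiv ℝ w (p.1, p.2.1) (1, f p.2.1 p.2.2) ∂ν := by
    intro w hw
    have hwc := hw.continuous
    have hLwc : Continuous fun p : ℝ × (Fin n → ℝ) × (Fin m → ℝ) =>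
        fderiv ℝ w (p.1, p.2.1) (1, f p.2.1 p.2.2) := by
      have h1 : Continuous (fderiv ℝ w) := hw.continuous_fderiv one_ne_zero
      have hmap : Continuous fun p : ℝ × (Fin n → ℝ) × (Fin m → ℝ) =>
          ((fderiv ℝ w (p.1, p.2.1)), (((1:ℝ), f p.2.1 p.2.2) : ℝ × (Fin n → ℝ))) := by
        refine Continuous.prodMk ?_ ?_
        · exact h1.comp (continuous_fst.prodMk (continuous_fst.comp continuous_snd))
        · refine Continuous.prodMk continuous_const ?_
          exact hf.comp ((continuous_fst.comp continuous_snd).prodMk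
            (continuous_snd.comp continuous_snd))
      exact isBoundedBilinearMap_apply.continuous.comp hmap
    have h1 := hνTconv w hwc
    have h2 := hνconv _ hLwc
    have h3 : Tendsto (fun z : ℝ × (Fin n → ℝ) => w z) ↑F (𝓝 (w z₀)) :=
      (hwc.tendsto z₀).comp hidt
    have heq : ∀ᶠ z in ↑F, (∫ q, w q ∂(Φ z).2) - w z
        = ∫ p, fderiv ℝ w (p.1, p.2.1) (1, f p.2.1 p.2.2) ∂(Φ z).1 := by
      filter_upwards [hGae] with z hz using hz.2.2.2.2.1 w hw
    exact tendsto_nhds_unique ((h1.sub h3).congr' heq) h2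
  -- supports in the limit
  have hνT3 : ∀ᵐ q ∂νT, q.1 = T ∧ q.2 ∈ XT := by
    have hae : ∀ᵐ q ∂νT, q ∈ K₂ := by
      rw [ae_iff]
      refine measure_mono_null ?_ hνT2
      intro q hq
      exact hq
    filter_upwards [hae] with q hq
    rw [hK₂def] at hq
    exact ⟨hq.1, hq.2⟩
  have hν3 : ∀ᵐ p ∂ν, p.1 ∈ Icc z₀.1 T ∧ p.2.1 ∈ X ∧ p.2.2 ∈ U := by
    have haeK : ∀ᵐ p ∂ν, p ∈ K₁ := by
      rw [ae_iff]
      refine measure_mono_null ?_ hν2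
      intro p hp
      exact hp
    set g₀ : ℝ × (Fin n → ℝ) × (Fin m → ℝ) → ℝ := fun p => max (z₀.1 - p.1) 0 with hg₀def
    have hg₀c : Continuous g₀ := (continuous_const.sub continuous_fst).max continuous_const
    have hg₀nn : ∀ p, 0 ≤ g₀ p := fun p => le_max_right _ _
    have hconv := hνconv g₀ hg₀c
    have hub : ∀ᶠ z in ↑F, ∫ p, g₀ p ∂(Φ z).1 ≤ max (z₀.1 - z.1) 0 * (T + 1) := by
      filter_upwards [hGae] with z hz
      haveI := hz.1
      have hint : Integrable g₀ (Φ z).1 := integrable_of_support hK₁ hz.2.2.2.2.2.1 hg₀c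
      have hae1 : ∀ᵐ p ∂(Φ z).1, g₀ p ≤ max (z₀.1 - z.1) 0 := by
        filter_upwards [hz.2.2.1] with p hp
        have h5 : z₀.1 - p.1 ≤ z₀.1 - z.1 := by
          have := hp.1.1
          linarith
        exact max_le_max h5 (le_refl 0)
      calc ∫ p, g₀ p ∂(Φ z).1 ≤ ∫ _p, max (z₀.1 - z.1) 0 ∂(Φ z).1 :=
            integral_mono_ae hint (integrable_const _) hae1
        _ = max (z₀.1 - z.1) 0 * ((Φ z).1 Set.univ).toReal := by
            rw [integral_const, smul_eq_mul, mul_comm, measureReal_def]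
        _ ≤ max (z₀.1 - z.1) 0 * (T + 1) :=
            mul_le_mul_of_nonneg_left (hΦm1 z) (le_max_right _ _)
    have hub0 : Tendsto (fun z : ℝ × (Fin n → ℝ) => max (z₀.1 - z.1) 0 * (T + 1)) ↑F (𝓝 0) := by
      have hcont : Continuous fun z : ℝ × (Fin n → ℝ) => max (z₀.1 - z.1) 0 * (T + 1) :=
        (((continuous_const.sub continuous_fst).max continuous_const).mul continuous_const)
      have := (hcont.tendsto z₀).comp hidt
      simpa [Function.comp_def] using this
    have hL0 : ∫ p, g₀ p ∂ν = 0 := by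
      refine le_antisymm (le_of_tendsto_of_tendsto hconv hub0 hub) ?_
      exact integral_nonneg hg₀nn
    have hg0ae : g₀ =ᵐ[ν] 0 :=
      (integral_eq_zero_iff_of_nonneg hg₀nn (integrable_of_support hK₁ hν2 hg₀c)).mp hL0
    filter_upwards [hg0ae, haeK] with p h1 h2
    rw [hK₁def] at h2
    have h3 : z₀.1 - p.1 ≤ 0 := by
      have h4 : z₀.1 - p.1 ≤ g₀ p := le_max_left _ _
      rw [Pi.zero_apply] at h1
      rw [h1] at h4
      exact h4
    exact ⟨⟨by linarith, h2.1.2⟩, h2.2.1, h2.2.2⟩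
  -- cost in the limit
  have hlcont : Continuous fun p : ℝ × (Fin n → ℝ) × (Fin m → ℝ) => l p.2.1 p.2.2 :=
    hl.comp ((continuous_fst.comp continuous_snd).prodMk (continuous_snd.comp continuous_snd))
  have hlTcont : Continuous fun q : ℝ × (Fin n → ℝ) => lT q.2 := hlT.comp continuous_snd
  have hcostconv : Tendsto
      (fun z => (∫ p, l p.2.1 p.2.2 ∂(Φ z).1) + ∫ q, lT q.2 ∂(Φ z).2) ↑F
      (𝓝 ((∫ p, l p.2.1 p.2.2 ∂ν) + ∫ q, lT q.2 ∂νT)) :=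
    (hνconv _ hlcont).add (hνTconv _ hlTcont)
  have hcostle : (∫ p, l p.2.1 p.2.2 ∂ν) + ∫ q, lT q.2 ∂νT ≤ r := by
    refine le_of_tendsto hcostconv ?_
    filter_upwards [hGae] with z hz using le_of_lt hz.2.2.2.2.2.2.2.2.2
  -- feasibility of the limit pair at z₀, contradiction
  have hps0 : pstar z₀ = pstar (z₀.1, z₀.2) := by rw [Prod.mk.eta]
  have hmem : (((∫ p, l p.2.1 p.2.2 ∂ν) + ∫ q, lT q.2 ∂νT : ℝ) : EReal) ∈
      {c : EReal |
        ∃ (μ : Measure (ℝ × (Fin n → ℝ) × (Fin m → ℝ)))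
          (μT : Measure (ℝ × (Fin n → ℝ))),
          IsFiniteMeasure μ ∧ IsFiniteMeasure μT ∧
          (∀ᵐ p ∂μ, p.1 ∈ Icc z₀.1 T ∧ p.2.1 ∈ X ∧ p.2.2 ∈ U) ∧
          (∀ᵐ q ∂μT, q.1 = T ∧ q.2 ∈ XT) ∧
          (∀ w : ℝ × (Fin n → ℝ) → ℝ, ContDiff ℝ 1 w →
            (∫ q, w q ∂μT) - w (z₀.1, z₀.2) =
              ∫ p, fderiv ℝ w (p.1, p.2.1) (1, f p.2.1 p.2.2) ∂μ) ∧
          c = (((∫ p, l p.2.1 p.2.2 ∂μ) + ∫ q, lT q.2 ∂μT : ℝ) : EReal)} := by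
    refine ⟨ν, νT, hν1, hνT1, hν3, hνT3, ?_, rfl⟩
    intro w hw
    have := hLiouν w hw
    rwa [Prod.mk.eta]
  have hple : pstar z₀ ≤ (((∫ p, l p.2.1 p.2.2 ∂ν) + ∫ q, lT q.2 ∂νT : ℝ) : EReal) := by
    rw [hps0, hpstar z₀.1 z₀.2]
    exact sInf_le hmem
  have hfinal : pstar z₀ < pstar z₀ := by
    refine lt_of_le_of_lt (hple.trans ?_) hc2
    rw [← hrc]
    exact_mod_cast hcostle
  exact absurd hfinal (lt_irrefl _)
end

section
/- Dirac right-hand side forces trajectory concentration in dimension 0 of control (uncontrolled case): let f : ℝⁿ → ℝⁿ be Lipschitz, X ⊆ ℝⁿ compact invariant under the flow on [t₀,T], and let x(·) be the unique solution of ẋ = f(x), x(t₀) = x₀ ∈ X. If μ is a nonnegative Borel measure on [t₀,T] × X and μ_T a nonnegative measure on {T} × X satisfying ∫ w dμ_T − w(t₀,x₀) = ∫ (∂w/∂t + ∇w · f) dμ for all C¹ test functions w, and the time marginal of μ is Lebesgue measure on [t₀,T], then μ = dt ⊗ δ_{x(t)} and μ_T = δ_T ⊗ δ_{x(T)}. 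-/
open MeasureTheory Set

/-- Sum of squares of coordinates. -/
noncomputable def liouvQ {n : ℕ} (v : Fin n → ℝ) : ℝ := ∑ i, v i ^ 2

/-- The key test function `e^{-ct}‖y - x(t)‖²`. -/
noncomputable def liouvW2 {n : ℕ} (c : ℝ) (x : ℝ → Fin n → ℝ) (p : ℝ × (Fin n → ℝ)) : ℝ :=
  Real.exp (-c * p.1) * liouvQ (p.2 - x p.1)

/-- Its transport derivative `∂_t + f·∇`. -/
noncomputable def liouvE2 {n : ℕ} (c : ℝ) (f : (Fin n → ℝ) → (Fin n → ℝ))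
    (x : ℝ → Fin n → ℝ) (p : ℝ × (Fin n → ℝ)) : ℝ :=
  -c * Real.exp (-c * p.1) * liouvQ (p.2 - x p.1)
    + Real.exp (-c * p.1) * ∑ i, 2 * (p.2 i - x p.1 i) * (f p.2 i - f (x p.1) i)

lemma liouvQ_nonneg {n : ℕ} (v : Fin n → ℝ) : 0 ≤ liouvQ v :=
  Finset.sum_nonneg fun _ _ => sq_nonneg _

lemma liouvQ_eq_zero {n : ℕ} {v : Fin n → ℝ} (h : liouvQ v = 0) : v = 0 := by
  funext i
  have := (Finset.sum_eq_zero_iff_of_nonneg (fun i _ => sq_nonneg (v i))).mp h i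
    (Finset.mem_univ i)
  simpa [pow_eq_zero_iff] using this

lemma liouvQ_contDiff {n : ℕ} : ContDiff ℝ 1 (liouvQ (n := n)) := by
  unfold liouvQ
  exact ContDiff.sum fun i _ => (ContinuousLinearMap.proj (R := ℝ) (φ := fun _ : Fin n => ℝ) i).contDiff.pow 2

lemma liouvW2_contDiff {n : ℕ} {c : ℝ} {x : ℝ → Fin n → ℝ} (hx : ContDiff ℝ 1 x) :
    ContDiff ℝ 1 (liouvW2 c x) := by
  unfold liouvW2
  exact (Real.contDiff_exp.comp (contDiff_const.mul contDiff_fst)).mul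
    (liouvQ_contDiff.comp (contDiff_snd.sub (hx.comp contDiff_fst)))

lemma liouvW2_nonneg {n : ℕ} (c : ℝ) (x : ℝ → Fin n → ℝ) (p : ℝ × (Fin n → ℝ)) :
    0 ≤ liouvW2 c x p :=
  mul_nonneg (Real.exp_pos _).le (liouvQ_nonneg _)

/-- Directional derivative of a `C¹` function along the vector `(1, f y)`. -/
lemma liouv_key {n : ℕ} (f : (Fin n → ℝ) → (Fin n → ℝ)) (w : ℝ × (Fin n → ℝ) → ℝ)
    (hw : ContDiff ℝ 1 w) (p : ℝ × (Fin n → ℝ)) :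
    HasDerivAt (fun s : ℝ => w (p.1 + s, p.2 + s • f p.2)) (fderiv ℝ w p (1, f p.2)) 0 := by
  have h1 : HasDerivAt (fun s : ℝ => p.1 + s) 1 0 := (hasDerivAt_id 0).const_add p.1
  have h2 : HasDerivAt (fun s : ℝ => p.2 + s • f p.2) (f p.2) 0 := by
    simpa using ((hasDerivAt_id (0:ℝ)).smul_const (f p.2)).const_add p.2
  have hline : HasDerivAt (fun s : ℝ => ((p.1 + s, p.2 + s • f p.2) : ℝ × (Fin n → ℝ)))
      ((1:ℝ), f p.2) 0 := h1.prodMk h2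
  have hfd : HasFDerivAt w (fderiv ℝ w p) ((p.1 + (0:ℝ), p.2 + (0:ℝ) • f p.2)) := by
    rw [show ((p.1 + (0:ℝ), p.2 + (0:ℝ) • f p.2)) = p by simp]
    exact (hw.differentiable one_ne_zero p).hasFDerivAt
  simpa [Function.comp_def] using hfd.comp_hasDerivAt 0 hline

/-- Explicit derivative of `liouvW2` along the characteristic direction. -/
lemma liouvW2_line {n : ℕ} (f : (Fin n → ℝ) → (Fin n → ℝ)) (c : ℝ)
    (x : ℝ → Fin n → ℝ) (hode : ∀ t, HasDerivAt x (f (x t)) t) (p : ℝ × (Fin n → ℝ)) :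
    HasDerivAt (fun s : ℝ => liouvW2 c x (p.1 + s, p.2 + s • f p.2)) (liouvE2 c f x p) 0 := by
  show HasDerivAt
    (fun s : ℝ => Real.exp (-c * (p.1 + s)) * ∑ i, ((p.2 + s • f p.2 - x (p.1 + s)) i) ^ 2) _ 0
  have hxi : ∀ i, HasDerivAt (fun s : ℝ => x (p.1 + s) i) (f (x p.1) i) 0 := by
    intro i
    have hx : HasDerivAt (fun s : ℝ => x (p.1 + s)) (f (x p.1)) 0 := by
      have := (hode (p.1 + 0)).scomp 0 ((hasDerivAt_id (0:ℝ)).const_add p.1)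
      simpa [Function.comp_def] using this
    exact hasDerivAt_pi.mp hx i
  have hterm : ∀ i, HasDerivAt (fun s : ℝ => (p.2 i + s * f p.2 i - x (p.1 + s) i) ^ 2)
      (2 * (p.2 i - x p.1 i) * (f p.2 i - f (x p.1) i)) 0 := by
    intro i
    have hin : HasDerivAt (fun s : ℝ => p.2 i + s * f p.2 i - x (p.1 + s) i)
        (f p.2 i - f (x p.1) i) 0 := by
      have h1 : HasDerivAt (fun s : ℝ => p.2 i + s * f p.2 i) (f p.2 i) 0 := by
        simpa using ((hasDerivAt_id (0:ℝ)).mul_const (f p.2 i)).const_add (p.2 i)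
      exact h1.sub (hxi i)
    have := hin.fun_pow 2
    norm_num at this
    convert this using 1
    try ring
  have hQ : HasDerivAt (fun s : ℝ => ∑ i, (p.2 i + s * f p.2 i - x (p.1 + s) i) ^ 2)
      (∑ i, 2 * (p.2 i - x p.1 i) * (f p.2 i - f (x p.1) i)) 0 :=
    HasDerivAt.fun_sum (fun i (_ : i ∈ Finset.univ) => hterm i)
  have hexp : HasDerivAt (fun s : ℝ => Real.exp (-c * (p.1 + s))) (-c * Real.exp (-c * p.1)) 0 := by
    have := (((hasDerivAt_id (0:ℝ)).const_add p.1).const_mul (-c)).exp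
    simpa [mul_comm] using this
  have hfun : (fun s : ℝ => Real.exp (-c * (p.1 + s)) * ∑ i, ((p.2 + s • f p.2 - x (p.1 + s)) i) ^ 2)
      = (fun s : ℝ => Real.exp (-c * (p.1 + s)) * ∑ i, (p.2 i + s * f p.2 i - x (p.1 + s) i) ^ 2) := by
    funext s
    simp [smul_eq_mul]
  rw [hfun]
  have := hexp.fun_mul hQ
  norm_num at this
  unfold liouvE2 liouvQ
  convert this using 2 <;> first | rfl | simp [neg_mul]

/-- The transport derivative of `liouvW2` is nonpositive when `c = 2nK`. -/
lemma liouvE2_nonpos {n : ℕ} {f : (Fin n → ℝ) → (Fin n → ℝ)} {K : NNReal}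
    (hf : LipschitzWith K f) (x : ℝ → Fin n → ℝ) (p : ℝ × (Fin n → ℝ)) :
    liouvE2 (2 * n * K) f x p ≤ 0 := by
  set c : ℝ := 2 * n * K with hc
  set u : Fin n → ℝ := p.2 - x p.1 with hu
  have hnorm : ‖u‖ ^ 2 ≤ liouvQ u := by
    have h1 : ‖u‖ ≤ Real.sqrt (liouvQ u) := by
      rw [pi_norm_le_iff_of_nonneg (Real.sqrt_nonneg _)]
      intro i
      have h2 : u i ^ 2 ≤ liouvQ u :=
        Finset.single_le_sum (fun i _ => sq_nonneg (u i)) (Finset.mem_univ i)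
      calc ‖u i‖ = Real.sqrt (u i ^ 2) := by
            rw [Real.sqrt_sq_eq_abs, Real.norm_eq_abs]
        _ ≤ Real.sqrt (liouvQ u) := Real.sqrt_le_sqrt h2
    calc ‖u‖ ^ 2 ≤ Real.sqrt (liouvQ u) ^ 2 := by
          gcongr
      _ = liouvQ u := Real.sq_sqrt (liouvQ_nonneg u)
  have hDq : (∑ i, 2 * (p.2 i - x p.1 i) * (f p.2 i - f (x p.1) i)) ≤ c * liouvQ u := by
    have hbound : ∀ i, 2 * (p.2 i - x p.1 i) * (f p.2 i - f (x p.1) i)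
        ≤ 2 * K * liouvQ u := by
      intro i
      have h1 : |u i| ≤ ‖u‖ := by
        simpa [Real.norm_eq_abs] using norm_le_pi_norm u i
      have h2 : |f p.2 i - f (x p.1) i| ≤ K * ‖u‖ := by
        have h3 : dist (f p.2 i) (f (x p.1) i) ≤ dist (f p.2) (f (x p.1)) :=
          dist_le_pi_dist _ _ i
        have h4 := hf.dist_le_mul p.2 (x p.1)
        calc |f p.2 i - f (x p.1) i| = dist (f p.2 i) (f (x p.1) i) := (Real.dist_eq _ _).symm
          _ ≤ dist (f p.2) (f (x p.1)) := h3
          _ ≤ K * dist p.2 (x p.1) := h4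
          _ = K * ‖u‖ := by rw [dist_eq_norm]
      have hui : p.2 i - x p.1 i = u i := by simp [hu]
      rw [hui]
      calc 2 * u i * (f p.2 i - f (x p.1) i) ≤ 2 * (|u i| * |f p.2 i - f (x p.1) i|) := by
            have h5 : u i * (f p.2 i - f (x p.1) i) ≤ |u i| * |f p.2 i - f (x p.1) i| :=
              (le_abs_self _).trans (le_of_eq (abs_mul _ _))
            nlinarith [h5]
        _ ≤ 2 * (‖u‖ * (K * ‖u‖)) := by
            have h6 := mul_le_mul h1 h2 (abs_nonneg _) (norm_nonneg _)
            linarith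
        _ = 2 * K * ‖u‖ ^ 2 := by ring
        _ ≤ 2 * K * liouvQ u := by
            have : (0:ℝ) ≤ 2 * K := by positivity
            exact mul_le_mul_of_nonneg_left hnorm this
    calc (∑ i, 2 * (p.2 i - x p.1 i) * (f p.2 i - f (x p.1) i))
        ≤ ∑ _i : Fin n, 2 * K * liouvQ u := Finset.sum_le_sum fun i _ => hbound i
      _ = n * (2 * K * liouvQ u) := by
          rw [Finset.sum_const, Finset.card_univ, Fintype.card_fin, nsmul_eq_mul]
      _ = c * liouvQ u := by rw [hc]; ring
  have hepos : (0:ℝ) < Real.exp (-c * p.1) := Real.exp_pos _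
  have := mul_le_mul_of_nonneg_left hDq hepos.le
  unfold liouvE2
  nlinarith [this]

/-- uniqueness for the Liouville equation in the uncontrolled case: with a
Lipschitz vector field and a compact flow-invariant set `X`, any nonnegative measure
solution `(μ, μ_T)` of the weak Liouville equation with Dirac initial data whose time
marginal is Lebesgue measure on `[t₀,T]` is concentrated on the unique characteristic
curve: `μ = dt ⊗ δ_{x(t)}` and `μ_T = δ_{(T,x(T))}`. -/
theorem liouville_dirac_uniqueness
    {n : ℕ} (X : Set (Fin n → ℝ)) (hX : IsCompact X)
    (f : (Fin n → ℝ) → (Fin n → ℝ)) (K : NNReal) (hf : LipschitzWith K f)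
    (t₀ T : ℝ) (ht : t₀ ≤ T) (x₀ : Fin n → ℝ) (hx₀ : x₀ ∈ X)
    -- X is invariant under the flow on [t₀, T]
    (hinv : ∀ y : ℝ → Fin n → ℝ, (∀ t, HasDerivAt y (f (y t)) t) →
      y t₀ ∈ X → ∀ t ∈ Icc t₀ T, y t ∈ X)
    -- the unique solution of the Cauchy problem
    (x : ℝ → Fin n → ℝ) (hode : ∀ t, HasDerivAt x (f (x t)) t)
    (hini : x t₀ = x₀)
    -- measure solution of the Liouville equation
    (μ : Measure (ℝ × (Fin n → ℝ))) [IsFiniteMeasure μ]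
    (μT : Measure (ℝ × (Fin n → ℝ))) [IsFiniteMeasure μT]
    (hμsupp : ∀ᵐ p ∂μ, p.1 ∈ Icc t₀ T ∧ p.2 ∈ X)
    (hμTsupp : ∀ᵐ q ∂μT, q.1 = T ∧ q.2 ∈ X)
    (hliouville : ∀ w : ℝ × (Fin n → ℝ) → ℝ, ContDiff ℝ 1 w →
      (∫ q, w q ∂μT) - w (t₀, x₀) = ∫ p, fderiv ℝ w p (1, f p.2) ∂μ)
    -- time marginal of μ is Lebesgue measure on [t₀, T]
    (hmarg : μ.map Prod.fst = volume.restrict (Icc t₀ T)) :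
    μ = Measure.map (fun t => (t, x t)) (volume.restrict (Icc t₀ T)) ∧
      μT = Measure.dirac (T, x T) := by
  classical
  -- regularity of the characteristic curve
  have hxd : Differentiable ℝ x := fun t => (hode t).differentiableAt
  have hxc : Continuous x := hxd.continuous
  have hxC : ContDiff ℝ 1 x := by
    rw [contDiff_one_iff_deriv]
    refine ⟨hxd, ?_⟩
    have hderiv : deriv x = fun t => f (x t) := funext fun t => (hode t).deriv
    rw [hderiv]
    exact hf.continuous.comp hxc
  set c : ℝ := 2 * n * K with hc
  set w2 : ℝ × (Fin n → ℝ) → ℝ := liouvW2 c x with hw2def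
  set E2 : ℝ × (Fin n → ℝ) → ℝ := liouvE2 c f x with hE2def
  have hw2C : ContDiff ℝ 1 w2 := liouvW2_contDiff hxC
  have hE2le : ∀ p, E2 p ≤ 0 := fun p => liouvE2_nonpos hf x p
  have hfd2 : ∀ p, fderiv ℝ w2 p (1, f p.2) = E2 p := fun p =>
    (liouv_key f w2 hw2C p).unique (liouvW2_line f c x hode p)
  -- w3 := (T - t) * w2
  set w3 : ℝ × (Fin n → ℝ) → ℝ := fun p => (T - p.1) * w2 p with hw3def
  have hw3C : ContDiff ℝ 1 w3 := (contDiff_const.sub contDiff_fst).mul hw2C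
  have hfd3 : ∀ p, fderiv ℝ w3 p (1, f p.2) = -(w2 p) + (T - p.1) * E2 p := by
    intro p
    refine (liouv_key f w3 hw3C p).unique ?_
    have h1 : HasDerivAt (fun s : ℝ => T - (p.1 + s)) (-1) 0 :=
      ((hasDerivAt_id (0:ℝ)).const_add p.1).const_sub T
    have := h1.fun_mul (liouvW2_line f c x hode p)
    norm_num at this
    convert this using 1
  -- continuity of the integrands
  have hw2cont : Continuous w2 := hw2C.continuous
  have hE2cont : Continuous E2 := by
    rw [hE2def]
    unfold liouvE2 liouvQ
    have hfc : Continuous f := hf.continuous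
    refine Continuous.add ?_ ?_
    · exact (continuous_const.mul (Real.continuous_exp.comp (continuous_const.mul
        continuous_fst))).mul (continuous_finset_sum _ fun i _ =>
          (((continuous_apply i).comp continuous_snd).sub
            ((continuous_apply i).comp (hxc.comp continuous_fst))).pow 2)
    · refine (Real.continuous_exp.comp (continuous_const.mul continuous_fst)).mul
        (continuous_finset_sum _ fun i _ => ?_)
      exact (continuous_const.mul (((continuous_apply i).comp continuous_snd).sub
        ((continuous_apply i).comp (hxc.comp continuous_fst)))).mul
        (((continuous_apply i).comp (hfc.comp continuous_snd)).sub
          ((continuous_apply i).comp (hfc.comp (hxc.comp continuous_fst))))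
  -- integrability from compact support
  have hKc : IsCompact ((Icc t₀ T) ×ˢ X) := isCompact_Icc.prod hX
  have hint : ∀ g : ℝ × (Fin n → ℝ) → ℝ, Continuous g → Integrable g μ := by
    intro g hg
    obtain ⟨C, hC⟩ := hKc.exists_bound_of_continuousOn hg.continuousOn
    refine ⟨hg.aestronglyMeasurable, HasFiniteIntegral.of_bounded (C := C) ?_⟩
    filter_upwards [hμsupp] with p hp
    exact hC p (mem_prod.mpr ⟨hp.1, hp.2⟩)
  have hintT : ∀ g : ℝ × (Fin n → ℝ) → ℝ, Continuous g → Integrable g μT := by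
    intro g hg
    obtain ⟨C, hC⟩ := hKc.exists_bound_of_continuousOn hg.continuousOn
    refine ⟨hg.aestronglyMeasurable, HasFiniteIntegral.of_bounded (C := C) ?_⟩
    filter_upwards [hμTsupp] with q hq
    refine hC q (mem_prod.mpr ⟨?_, hq.2⟩)
    rw [hq.1]
    exact ⟨ht, le_refl T⟩
  -- μT is a probability measure
  have hμT1 : μT univ = 1 := by
    have h := hliouville (fun _ => (1:ℝ)) contDiff_const
    simp only [fderiv_fun_const, Pi.zero_apply, ContinuousLinearMap.zero_apply, integral_zero,
      integral_const, smul_eq_mul, mul_one] at h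
    have h1 : (μT univ).toReal = 1 := by rw [measureReal_def] at h; linarith
    exact (ENNReal.toReal_eq_one_iff _).mp h1
  -- w2 vanishes at the initial point
  have hw2ini : w2 (t₀, x₀) = 0 := by
    rw [hw2def]
    unfold liouvW2 liouvQ
    simp [hini]
  -- apply the Liouville equation to w2
  have h2 := hliouville w2 hw2C
  rw [show (∫ p, fderiv ℝ w2 p (1, f p.2) ∂μ) = ∫ p, E2 p ∂μ from
    integral_congr_ae (Filter.Eventually.of_forall hfd2), hw2ini, sub_zero] at h2
  have hw2T0 : ∫ q, w2 q ∂μT = 0 := by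
    have hle : ∫ q, w2 q ∂μT ≤ 0 := by
      rw [h2]
      exact integral_nonpos_of_ae (Filter.Eventually.of_forall hE2le)
    have hge : 0 ≤ ∫ q, w2 q ∂μT := integral_nonneg fun q => liouvW2_nonneg c x q
    linarith
  have hw2Tae : ∀ᵐ q ∂μT, w2 q = 0 := by
    have := (integral_eq_zero_iff_of_nonneg (fun q => liouvW2_nonneg c x q)
      (hintT w2 hw2cont)).mp hw2T0
    filter_upwards [this] with q hq using hq
  have hμTae : ∀ᵐ q ∂μT, q = (T, x T) := by
    filter_upwards [hμTsupp, hw2Tae] with q hq hw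
    obtain ⟨hqT, -⟩ := hq
    have hQ0 : liouvQ (q.2 - x q.1) = 0 := by
      rw [hw2def] at hw
      unfold liouvW2 at hw
      have := Real.exp_pos (-c * q.1)
      rcases mul_eq_zero.mp hw with h | h
      · exact absurd h this.ne'
      · exact h
    have h0 : q.2 - x q.1 = 0 := liouvQ_eq_zero hQ0
    have h1 : q.2 = x q.1 := by
      have := sub_eq_zero.mp h0
      exact this
    exact Prod.ext hqT (by rw [h1, hqT])
  -- conclusion for μT
  have hμTeq : μT = Measure.dirac (T, x T) := by
    have h1 : μT = Measure.map (fun _ => ((T, x T) : ℝ × (Fin n → ℝ))) μT := by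
      conv_lhs => rw [← Measure.map_id (μ := μT)]
      exact Measure.map_congr (by filter_upwards [hμTae] with q hq using hq)
    rw [h1, Measure.map_const, hμT1, one_smul]
  -- apply the Liouville equation to w3
  have h3 := hliouville w3 hw3C
  have hT0 : ∫ q, w3 q ∂μT = 0 := by
    rw [show (∫ q, w3 q ∂μT) = ∫ _q, (0:ℝ) ∂μT from integral_congr_ae ?_, integral_zero]
    filter_upwards [hμTsupp] with q hq
    rw [hw3def]
    simp [hq.1]
  have hini3 : w3 (t₀, x₀) = 0 := by
    rw [hw3def]
    simp [hw2ini]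
  rw [hT0, hini3, sub_zero,
    show (∫ p, fderiv ℝ w3 p (1, f p.2) ∂μ) = ∫ p, (-(w2 p) + (T - p.1) * E2 p) ∂μ from
      integral_congr_ae (Filter.Eventually.of_forall hfd3)] at h3
  have hIw2 : Integrable w2 μ := hint w2 hw2cont
  have hIB : Integrable (fun p => (T - p.1) * E2 p) μ :=
    hint _ ((continuous_const.sub continuous_fst).mul hE2cont)
  have hsplit : ∫ p, (-(w2 p) + (T - p.1) * E2 p) ∂μ
      = (∫ p, -(w2 p) ∂μ) + ∫ p, (T - p.1) * E2 p ∂μ := integral_add hIw2.neg hIB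
  have hBle : ∫ p, (T - p.1) * E2 p ∂μ ≤ 0 := by
    refine integral_nonpos_of_ae ?_
    filter_upwards [hμsupp] with p hp
    exact mul_nonpos_of_nonneg_of_nonpos (by linarith [hp.1.2]) (hE2le p)
  have hw2μ0 : ∫ p, w2 p ∂μ = 0 := by
    have hneg : ∫ p, -(w2 p) ∂μ = -∫ p, w2 p ∂μ := integral_neg _
    have hge : 0 ≤ ∫ p, w2 p ∂μ := integral_nonneg fun p => liouvW2_nonneg c x p
    rw [hsplit, hneg] at h3
    linarith
  have hμae : ∀ᵐ p ∂μ, p.2 = x p.1 := by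
    have := (integral_eq_zero_iff_of_nonneg (fun p => liouvW2_nonneg c x p) hIw2).mp hw2μ0
    filter_upwards [this] with p hp
    have hp0 : w2 p = 0 := hp
    rw [hw2def] at hp0
    unfold liouvW2 at hp0
    have hepos := Real.exp_pos (-c * p.1)
    have hQ0 : liouvQ (p.2 - x p.1) = 0 := by
      rcases mul_eq_zero.mp hp0 with h | h
      · exact absurd h hepos.ne'
      · exact h
    exact sub_eq_zero.mp (liouvQ_eq_zero hQ0)
  -- conclusion for μ
  have hg : Measurable (fun t : ℝ => ((t, x t) : ℝ × (Fin n → ℝ))) :=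
    (continuous_id.prodMk hxc).measurable
  have hμeq : μ = Measure.map (fun t => (t, x t)) (volume.restrict (Icc t₀ T)) := by
    calc μ = Measure.map id μ := (Measure.map_id).symm
      _ = Measure.map ((fun t : ℝ => ((t, x t) : ℝ × (Fin n → ℝ))) ∘ Prod.fst) μ := by
          refine Measure.map_congr ?_
          filter_upwards [hμae] with p hp
          exact Prod.ext rfl hp
      _ = Measure.map (fun t => (t, x t)) (Measure.map Prod.fst μ) :=
          (Measure.map_map hg measurable_fst).symm
      _ = Measure.map (fun t => (t, x t)) (volume.restrict (Icc t₀ T)) := by rw [hmarg]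
  exact ⟨hμeq, hμTeq⟩
end
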